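/- arXiv:0901.3736 — 4 statements merged into one kernel-verified Lean document; each statement's English description precedes it below -/
import Mathlib

section
/- Let γ > 0 and let Φ satisfy the standing potential assumptions for γ. Then for every W ∈ B_γ with P(W) > 0, the derivative ∂P(W) = Ā(Φ′ ∘ (ĀW)) is not the zero element of L²(ℝ). -/
open MeasureTheory Real Filter

/-- Averaging operator `(Ā W)(φ) = ∫_{φ-1/2}^{φ+1/2} W(ψ) dψ`. -/
noncomputable def avg (W : ℝ → ℝ) (φ : ℝ) : ℝ := ∫ ψ in (φ - 1/2)..(φ + 1/2), W ψ

/-- `Φ'`, the derivative of the potential, taken within the relevant interval. -/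
noncomputable def Phi' (Φ : ℝ → ℝ) (γ : ℝ) : ℝ → ℝ :=
  fun r => derivWithin Φ (Set.Icc (-Real.sqrt (2*γ)) (Real.sqrt (2*γ))) r

/-- `Φ''`, the second derivative of the potential, taken within the relevant interval. -/
noncomputable def Phi'' (Φ : ℝ → ℝ) (γ : ℝ) : ℝ → ℝ :=
  fun r => iteratedDerivWithin 2 Φ (Set.Icc (-Real.sqrt (2*γ)) (Real.sqrt (2*γ))) r

/-- Standing assumptions on the potential `Φ` for parameter `γ`:
`Φ` is `C²` on `[-√(2γ), √(2γ)]`, convex there (`Φ'' ≥ 0`), normalised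
(`Φ(0) = Φ'(0) = 0`), and does not vanish identically on this interval. -/
def StandingAssumptions (Φ : ℝ → ℝ) (γ : ℝ) : Prop :=
  ContDiffOn ℝ 2 Φ (Set.Icc (-Real.sqrt (2*γ)) (Real.sqrt (2*γ))) ∧
  (∀ r ∈ Set.Icc (-Real.sqrt (2*γ)) (Real.sqrt (2*γ)), 0 ≤ Phi'' Φ γ r) ∧
  Φ 0 = 0 ∧ Phi' Φ γ 0 = 0 ∧
  ∃ r ∈ Set.Icc (-Real.sqrt (2*γ)) (Real.sqrt (2*γ)), Φ r ≠ 0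

/-- `β = Φ''(0)`. -/
noncomputable def betaOf (Φ : ℝ → ℝ) (γ : ℝ) : ℝ := Phi'' Φ γ 0

/-- Potential energy functional `P(W) = ∫_ℝ Φ((ĀW)(φ)) dφ`. -/
noncomputable def PE (Φ : ℝ → ℝ) (W : ℝ → ℝ) : ℝ := ∫ φ : ℝ, Φ (avg W φ)

/-- Gâteaux derivative `∂P(W) = Ā(Φ' ∘ (ĀW))`. -/
noncomputable def dPE (Φ : ℝ → ℝ) (γ : ℝ) (W : ℝ → ℝ) : ℝ → ℝ :=
  avg (fun ψ => Phi' Φ γ (avg W ψ))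

/-- Membership in the ball `B_γ = {W ∈ L²(ℝ) : (1/2)‖W‖₂² ≤ γ}`. -/
def memB (γ : ℝ) (W : ℝ → ℝ) : Prop :=
  MemLp W 2 volume ∧ (∫ φ : ℝ, (W φ)^2) ≤ 2*γ


lemma memLp_intervalIntegrable {W : ℝ → ℝ} (hW : MemLp W 2 volume) (a b : ℝ) :
    IntervalIntegrable W volume a b := by
  rw [intervalIntegrable_iff]
  have h : MemLp W 2 (volume.restrict (Set.Ioc (a ⊓ b) (a ⊔ b))) := hW.restrict _
  have := h.integrable one_le_two
  simpa [Set.uIoc, IntegrableOn] using this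

lemma cs_bound {W : ℝ → ℝ} (hW : MemLp W 2 volume) (a : ℝ) :
    |∫ ψ in a..(a+1), W ψ| ≤ Real.sqrt (∫ ψ in Set.Ioc a (a+1), (W ψ)^2) := by
  rw [intervalIntegral.integral_of_le (by linarith)]
  set μ := volume.restrict (Set.Ioc a (a+1)) with hμ
  have hconj : Real.HolderConjugate 2 2 := Real.HolderConjugate.two_two
  have hWμ : MemLp (fun x => |W x|) 2 μ := by
    simpa using (hW.restrict (Set.Ioc a (a+1))).norm
  have h1 : MemLp (fun _ : ℝ => (1:ℝ)) 2 μ := memLp_const 1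
  have hH := integral_mul_le_Lp_mul_Lq_of_nonneg (μ := μ) hconj
    (Eventually.of_forall fun x => abs_nonneg (W x))
    (Eventually.of_forall fun x => zero_le_one)
    (by simpa using hWμ) (by simpa using h1)
  have habs : |∫ ψ, W ψ ∂μ| ≤ ∫ ψ, |W ψ| ∂μ := by
    simpa [Real.norm_eq_abs] using norm_integral_le_integral_norm (f := W) (μ := μ)
  have hμuniv : (μ Set.univ).toReal = 1 := by
    simp [hμ, Real.volume_Ioc]
  have hone : (∫ _ : ℝ, (1:ℝ)^(2:ℝ) ∂μ) = 1 := by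
    simp [measureReal_def, hμuniv]
  have hsq : (∫ x, |W x| ^ (2:ℝ) ∂μ) = ∫ x, (W x)^2 ∂μ := by
    congr 1; funext x
    rw [show ((2:ℝ)) = ((2:ℕ):ℝ) by norm_num, Real.rpow_natCast, sq_abs]
  calc |∫ ψ, W ψ ∂μ| ≤ ∫ ψ, |W ψ| ∂μ := habs
    _ = ∫ ψ, |W ψ| * 1 ∂μ := by simp
    _ ≤ (∫ x, |W x| ^ (2:ℝ) ∂μ) ^ (1/(2:ℝ)) * (∫ _, (1:ℝ)^(2:ℝ) ∂μ) ^ (1/(2:ℝ)) := hH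
    _ = Real.sqrt (∫ x, (W x)^2 ∂μ) := by
        rw [hsq, hone, Real.sqrt_eq_rpow]; simp

lemma phi_zero_of_phi'_zero {Φ : ℝ → ℝ} {γ : ℝ} (hγ : 0 < γ)
    (hΦ : StandingAssumptions Φ γ) {r : ℝ}
    (hr : r ∈ Set.Icc (-Real.sqrt (2*γ)) (Real.sqrt (2*γ))) (h0 : Phi' Φ γ r = 0) :
    Φ r = 0 := by
  set R := Real.sqrt (2*γ) with hRdef
  have hR : 0 < R := Real.sqrt_pos.mpr (by linarith)
  set S := Set.Icc (-R) R with hSdef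
  have hU : UniqueDiffOn ℝ S := uniqueDiffOn_Icc (by linarith)
  have hintS : interior S = Set.Ioo (-R) R := interior_Icc
  have h0S : (0:ℝ) ∈ S := ⟨by linarith, by linarith⟩
  -- Phi' is C¹ on S, hence continuous, differentiable
  have hC1 : ContDiffOn ℝ 1 (Phi' Φ γ) S := by
    have := hΦ.1.derivWithin hU (m := 1) (by norm_num)
    exact this
  have hΦ'cont : ContinuousOn (Phi' Φ γ) S := hC1.continuousOn
  -- derivative of Phi' within S is Phi''
  have hderiv : ∀ x ∈ S, HasDerivWithinAt (Phi' Φ γ) (Phi'' Φ γ x) S x := by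
    intro x hx
    have hdiff : DifferentiableOn ℝ (Phi' Φ γ) S := hC1.differentiableOn one_ne_zero
    have h1 : HasDerivWithinAt (Phi' Φ γ) (derivWithin (Phi' Φ γ) S x) S x :=
      (hdiff x hx).hasDerivWithinAt
    have h2 : Phi'' Φ γ x = derivWithin (Phi' Φ γ) S x := by
      show iteratedDerivWithin 2 Φ S x = _
      rw [iteratedDerivWithin_succ]
      apply derivWithin_congr
      · intro y hy; exact congrFun iteratedDerivWithin_one y
      · exact congrFun iteratedDerivWithin_one x
    rw [h2]; exact h1
  -- Phi' is monotone on S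
  have hmono : MonotoneOn (Phi' Φ γ) S := by
    apply monotoneOn_of_hasDerivWithinAt_nonneg (convex_Icc _ _) hΦ'cont
      (f' := Phi'' Φ γ)
    · intro x hx
      exact (hderiv x (interior_subset hx)).mono interior_subset
    · intro x hx
      exact hΦ.2.1 x (interior_subset hx)
  -- Φ has derivative Phi' at interior points
  have hΦderiv : ∀ x ∈ Set.Ioo (-R) R, HasDerivAt Φ (Phi' Φ γ x) x := by
    intro x hx
    have hxS : x ∈ S := Set.mem_Icc_of_Ioo hx
    have := (hΦ.1.differentiableOn two_ne_zero x hxS).hasDerivWithinAt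
    exact this.hasDerivAt (Icc_mem_nhds hx.1 hx.2)
  have hΦcont : ContinuousOn Φ S := hΦ.1.continuousOn
  rcases lt_trichotomy r 0 with hneg | hzero | hpos
  · -- r < 0
    have hsub : Set.Icc r 0 ⊆ S := Set.Icc_subset_Icc hr.1 (by linarith)
    obtain ⟨c, hc, hceq⟩ := exists_hasDerivAt_eq_slope Φ (Phi' Φ γ) hneg
      (hΦcont.mono hsub)
      (fun x hx => hΦderiv x ⟨lt_of_le_of_lt hr.1 hx.1, hx.2.trans hR⟩)
    have hcS : c ∈ S := hsub (Set.mem_Icc_of_Ioo hc)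
    have h1 : Phi' Φ γ c ≤ 0 := by
      have := hmono hcS h0S hc.2.le
      rwa [hΦ.2.2.2.1] at this
    have h2 : 0 ≤ Phi' Φ γ c := by
      have := hmono hr hcS hc.1.le
      rwa [h0] at this
    have hc0 : Phi' Φ γ c = 0 := le_antisymm h1 h2
    rw [hc0, hΦ.2.2.1] at hceq
    rcases div_eq_zero_iff.mp hceq.symm with h | h
    · linarith [h]
    · exact absurd h (by linarith)
  · rw [hzero]; exact hΦ.2.2.1
  · -- r > 0
    have hsub : Set.Icc 0 r ⊆ S := Set.Icc_subset_Icc (by linarith) hr.2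
    obtain ⟨c, hc, hceq⟩ := exists_hasDerivAt_eq_slope Φ (Phi' Φ γ) hpos
      (hΦcont.mono hsub)
      (fun x hx => hΦderiv x ⟨by linarith [hx.1], lt_of_lt_of_le hx.2 hr.2⟩)
    have hcS : c ∈ S := hsub (Set.mem_Icc_of_Ioo hc)
    have h1 : 0 ≤ Phi' Φ γ c := by
      have := hmono h0S hcS hc.1.le
      rwa [hΦ.2.2.2.1] at this
    have h2 : Phi' Φ γ c ≤ 0 := by
      have := hmono hcS hr hc.2.le
      rwa [h0] at this
    have hc0 : Phi' Φ γ c = 0 := le_antisymm h2 h1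
    rw [hc0, hΦ.2.2.1] at hceq
    rcases div_eq_zero_iff.mp hceq.symm with h | h
    · linarith [h]
    · exact absurd h (by linarith)

/-- for `W ∈ B_γ` with `P(W) > 0`, the derivative `∂P(W)` is not the
zero element of `L²(ℝ)`. -/
theorem statement7 (γ : ℝ) (hγ : 0 < γ) (Φ : ℝ → ℝ) (hΦ : StandingAssumptions Φ γ)
    (W : ℝ → ℝ) (hW : memB γ W) (hpos : 0 < PE Φ W) :
    ¬ (dPE Φ γ W =ᵐ[volume] (0 : ℝ → ℝ)) := by
  intro hae
  set R := Real.sqrt (2*γ) with hRdef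
  have hR : 0 < R := Real.sqrt_pos.mpr (by linarith)
  set S := Set.Icc (-R) R with hSdef
  have hU : UniqueDiffOn ℝ S := uniqueDiffOn_Icc (by linarith)
  have h0S : (0:ℝ) ∈ S := ⟨by linarith, by linarith⟩
  have hIntW : ∀ a b, IntervalIntegrable W volume a b :=
    fun a b => memLp_intervalIntegrable hW.1 a b
  have hInt2 : Integrable (fun x => (W x)^2) volume := hW.1.integrable_sq
  -- avg W as difference of values of a primitive; rewrite of avg
  have havg_cs : ∀ φ : ℝ, |avg W φ| ≤
      Real.sqrt (∫ ψ in Set.Ioc (φ - 1/2) (φ + 1/2), (W ψ)^2) := by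
    intro φ
    have h := cs_bound hW.1 (φ - 1/2)
    rw [show φ - 1/2 + 1 = φ + 1/2 by ring] at h
    simpa [avg] using h
  -- avg W maps into S
  have hmem : ∀ φ, avg W φ ∈ S := by
    intro φ
    have h1 := havg_cs φ
    have h2 : (∫ ψ in Set.Ioc (φ - 1/2) (φ + 1/2), (W ψ)^2) ≤ ∫ φ : ℝ, (W φ)^2 :=
      setIntegral_le_integral hInt2 (Eventually.of_forall fun x => sq_nonneg _)
    have h3 : |avg W φ| ≤ R := by
      refine h1.trans ?_
      rw [hRdef]
      exact Real.sqrt_le_sqrt (h2.trans hW.2)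
    exact abs_le.mp h3
  -- continuity of avg W
  have hprimW : Continuous fun x => ∫ t in (0:ℝ)..x, W t :=
    intervalIntegral.continuous_primitive hIntW 0
  have havg_eq : avg W = fun φ =>
      (∫ t in (0:ℝ)..(φ + 1/2), W t) - ∫ t in (0:ℝ)..(φ - 1/2), W t := by
    funext φ
    rw [avg, ← intervalIntegral.integral_interval_sub_left (hIntW 0 (φ+1/2)) (hIntW 0 (φ-1/2))]
  have havg_cont : Continuous (avg W) := by
    rw [havg_eq]
    exact (hprimW.comp (continuous_id.add continuous_const)).sub
      (hprimW.comp (continuous_id.sub continuous_const))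
  -- continuity of f = Φ' ∘ avg W
  set f : ℝ → ℝ := fun ψ => Phi' Φ γ (avg W ψ) with hfdef
  have hC1 : ContDiffOn ℝ 1 (Phi' Φ γ) S := hΦ.1.derivWithin hU (m := 1) (by norm_num)
  have hΦ'cont : ContinuousOn (Phi' Φ γ) S := hC1.continuousOn
  have hf_cont : Continuous f := hΦ'cont.comp_continuous havg_cont hmem
  have hf_ii : ∀ a b, IntervalIntegrable f volume a b :=
    fun a b => hf_cont.intervalIntegrable a b
  -- dPE is continuous
  have hprimf : Continuous fun x => ∫ t in (0:ℝ)..x, f t :=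
    intervalIntegral.continuous_primitive hf_ii 0
  set G : ℝ → ℝ := fun x => ∫ t in (0:ℝ)..x, f t with hGdef
  have hdPE_eq : dPE Φ γ W = fun φ => G (φ + 1/2) - G (φ - 1/2) := by
    funext φ
    rw [dPE, avg, ← hfdef,
      ← intervalIntegral.integral_interval_sub_left (hf_ii 0 (φ+1/2)) (hf_ii 0 (φ-1/2))]
  have hdPE_cont : Continuous (dPE Φ γ W) := by
    rw [hdPE_eq]
    exact (hprimf.comp (continuous_id.add continuous_const)).sub
      (hprimf.comp (continuous_id.sub continuous_const))
  -- from a.e. zero to everywhere zero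
  have hdPE0 : dPE Φ γ W = 0 := (hdPE_cont.ae_eq_iff_eq (μ := volume) continuous_const).mp hae
  -- G is 1-periodic
  have hGper : ∀ x : ℝ, G (x + 1) = G x := by
    intro x
    have h := congrFun hdPE0 (x + 1/2)
    rw [hdPE_eq] at h
    simp only [Pi.zero_apply] at h
    have h2 : G (x + 1) - G x = 0 := by
      rw [show x + 1 = x + 1/2 + 1/2 by ring]
      nth_rewrite 2 [show x = x + 1/2 - 1/2 by ring]
      exact h
    linarith
  -- G has derivative f
  have hG' : ∀ x : ℝ, HasDerivAt G (f x) x := by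
    intro x
    exact intervalIntegral.integral_hasDerivAt_right (hf_ii 0 x)
      hf_cont.stronglyMeasurable.stronglyMeasurableAtFilter
      hf_cont.continuousAt
  -- f is 1-periodic
  have hfper : ∀ x : ℝ, f (x + 1) = f x := by
    intro x
    have hH : HasDerivAt (fun y => G (y + 1)) (f (x + 1)) x := by
      have := (hG' (x + 1)).comp x ((hasDerivAt_id x).add_const 1)
      simpa [Function.comp_def] using this
    have hHG : (fun y => G (y + 1)) = G := funext hGper
    rw [hHG] at hH
    exact hH.unique (hG' x)
  -- f(ψ + n) = f ψ
  have hshift : ∀ (ψ : ℝ) (n : ℕ), f (ψ + n) = f ψ := by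
    intro ψ n
    induction n with
    | zero => simp
    | succ k ih =>
      rw [show (ψ + (k + 1 : ℕ)) = (ψ + k) + 1 by push_cast; ring, hfper, ih]
  -- avg W (ψ + n) → 0
  have hdecay : ∀ ψ : ℝ, Tendsto (fun n : ℕ => avg W (ψ + n)) atTop (nhds 0) := by
    intro ψ
    set aseq : ℕ → ℝ := fun n => ∫ x in Set.Ioc (ψ + n - 1/2) (ψ + n + 1/2), (W x)^2
      with haseq
    have hanonneg : ∀ n, 0 ≤ aseq n := fun n =>
      setIntegral_nonneg measurableSet_Ioc fun x _ => sq_nonneg _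
    have hsum : Summable aseq := by
      apply summable_of_sum_range_le hanonneg
      intro n
      rw [haseq]
      simp only
      rw [← MeasureTheory.integral_biUnion_finset (Finset.range n)
        (fun i _ => measurableSet_Ioc)
        ?hd ?hi]
      · exact setIntegral_le_integral hInt2 (Eventually.of_forall fun x => sq_nonneg _)
      case hd =>
        intro i _ j _ hij
        simp only [Function.onFun]
        apply Set.Ioc_disjoint_Ioc.mpr
        rcases lt_or_gt_of_ne hij with h | h
        · have hc : (i:ℝ) + 1 ≤ j := by exact_mod_cast Nat.succ_le_of_lt h
          exact le_trans (min_le_left _ _) (le_trans (by linarith) (le_max_right _ _))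
        · have hc : (j:ℝ) + 1 ≤ i := by exact_mod_cast Nat.succ_le_of_lt h
          exact le_trans (min_le_right _ _) (le_trans (by linarith) (le_max_left _ _))
      case hi =>
        intro i _
        exact hInt2.integrableOn
    have haz : Tendsto aseq atTop (nhds 0) := hsum.tendsto_atTop_zero
    have hsq : Tendsto (fun n => Real.sqrt (aseq n)) atTop (nhds 0) := by
      have := (Real.continuous_sqrt.tendsto 0).comp haz
      rw [Real.sqrt_zero] at this
      exact this
    apply squeeze_zero_norm (fun n => ?_) hsq
    rw [Real.norm_eq_abs]
    exact havg_cs (ψ + n)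
  -- f ≡ 0
  have hfzero : ∀ ψ, f ψ = 0 := by
    intro ψ
    have h1 : Tendsto (fun n : ℕ => avg W (ψ + n)) atTop (nhds (0:ℝ)) := hdecay ψ
    have h2 : Tendsto (fun n : ℕ => avg W (ψ + n)) atTop (nhdsWithin (0:ℝ) S) :=
      tendsto_nhdsWithin_of_tendsto_nhds_of_eventually_within _ h1
        (Eventually.of_forall fun n => hmem _)
    have h3 : Tendsto (fun n : ℕ => f (ψ + n)) atTop (nhds (Phi' Φ γ 0)) :=
      (hΦ'cont 0 h0S).tendsto.comp h2
    rw [hΦ.2.2.2.1] at h3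
    have h4 : Tendsto (fun n : ℕ => f (ψ + n)) atTop (nhds (f ψ)) := by
      simp only [hshift ψ]
      exact tendsto_const_nhds
    exact tendsto_nhds_unique h4 h3
  -- hence Φ(avg W ψ) = 0 everywhere, so PE = 0
  have hPE0 : PE Φ W = 0 := by
    rw [PE]
    have : (fun φ => Φ (avg W φ)) = fun _ => 0 := by
      funext φ
      exact phi_zero_of_phi'_zero hγ hΦ (hmem φ) (hfzero φ)
    rw [this, integral_zero]
  rw [hPE0] at hpos
  exact lt_irrefl 0 hpos
end

section
/- Let γ > 0, let Φ satisfy the standing potential assumptions for γ, and let S ⊆ L²(ℝ) be a cone (closed under multiplication by nonnegative scalars) that is invariant under ∂P, i.e. W ∈ S implies Ā(Φ′ ∘ (ĀW)) ∈ S. If W* ∈ S ∩ B_γ maximises P over S ∩ B_γ and P(W*) > 0, then (1/2)‖W*‖₂² = γ and W* is a travelling wave: σ²W* = Ā(Φ′ ∘ (ĀW*)) almost everywhere, with σ² = ‖Ā(Φ′ ∘ (ĀW*))‖₂/√(2γ) > 0. -/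
open MeasureTheory Real Filter

open Set

section CS
variable {α : Type*} [MeasurableSpace α] {μ : Measure α} {f g : α → ℝ}

lemma norm_toLp_two (hf : MemLp f 2 μ) : ‖hf.toLp f‖ = Real.sqrt (∫ x, f x ^ 2 ∂μ) := by
  have h2 := MeasureTheory.L2.inner_def (𝕜 := ℝ) (hf.toLp f) (hf.toLp f)
  rw [real_inner_self_eq_norm_sq] at h2
  have h1 : (∫ x, f x ^ 2 ∂μ) = ‖hf.toLp f‖ ^ 2 := by
    rw [h2]
    apply integral_congr_ae
    filter_upwards [hf.coeFn_toLp] with x hx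
    simp [hx, RCLike.inner_apply, sq]
  rw [h1, Real.sqrt_sq (norm_nonneg _)]

lemma integrable_mul_L2 (hf : MemLp f 2 μ) (hg : MemLp g 2 μ) :
    Integrable (fun x => f x * g x) μ := by
  have h := MeasureTheory.L2.integrable_inner (𝕜 := ℝ) (hf.toLp f) (hg.toLp g)
  refine (integrable_congr ?_).1 h
  filter_upwards [hf.coeFn_toLp, hg.coeFn_toLp] with x h1 h2
  simp [h1, h2, RCLike.inner_apply]; ring

lemma integral_mul_eq_inner (hf : MemLp f 2 μ) (hg : MemLp g 2 μ) :
    (∫ x, f x * g x ∂μ) = @inner ℝ _ _ (hf.toLp f) (hg.toLp g) := by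
  rw [MeasureTheory.L2.inner_def]
  apply integral_congr_ae
  filter_upwards [hf.coeFn_toLp, hg.coeFn_toLp] with x h1 h2
  simp [h1, h2, RCLike.inner_apply]; ring

lemma abs_integral_mul_le (hf : MemLp f 2 μ) (hg : MemLp g 2 μ) :
    |∫ x, f x * g x ∂μ| ≤ Real.sqrt (∫ x, f x ^ 2 ∂μ) * Real.sqrt (∫ x, g x ^ 2 ∂μ) := by
  rw [integral_mul_eq_inner hf hg, ← norm_toLp_two hf, ← norm_toLp_two hg]
  exact abs_real_inner_le_norm _ _

lemma cs_eq (hf : MemLp f 2 μ) (hg : MemLp g 2 μ)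
    (h : (∫ x, f x * g x ∂μ) = Real.sqrt (∫ x, f x ^ 2 ∂μ) * Real.sqrt (∫ x, g x ^ 2 ∂μ)) :
    ∀ᵐ x ∂μ, Real.sqrt (∫ x, g x ^ 2 ∂μ) * f x = Real.sqrt (∫ x, f x ^ 2 ∂μ) * g x := by
  rw [integral_mul_eq_inner hf hg, ← norm_toLp_two hf, ← norm_toLp_two hg] at h
  have := inner_eq_norm_mul_iff_real.1 h
  have h1 := MeasureTheory.Lp.coeFn_smul (‖hg.toLp g‖) (hf.toLp f)
  have h2 := MeasureTheory.Lp.coeFn_smul (‖hf.toLp f‖) (hg.toLp g)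
  rw [this] at h1
  have h3 : (‖hg.toLp g‖ • ⇑(hf.toLp f) : α → ℝ) =ᵐ[μ] ‖hf.toLp f‖ • ⇑(hg.toLp g) :=
    h1.symm.trans h2
  rw [norm_toLp_two hf, norm_toLp_two hg] at h3
  filter_upwards [h3, hf.coeFn_toLp, hg.coeFn_toLp] with x e ef eg
  simpa [ef, eg] using e

end CS


lemma avg_eq_setIntegral (W : ℝ → ℝ) (φ : ℝ) :
    avg W φ = ∫ ψ in Ioc (φ - 1/2) (φ + 1/2), W ψ :=
  intervalIntegral.integral_of_le (by linarith)

lemma avg_congr_ae {W W' : ℝ → ℝ} (h : W =ᵐ[volume] W') : avg W = avg W' := by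
  funext φ; rw [avg_eq_setIntegral, avg_eq_setIntegral]
  exact integral_congr_ae (ae_restrict_of_ae h)

lemma memL2_intervalIntegrable {W : ℝ → ℝ} (hW : MemLp W 2 (volume : Measure ℝ)) (a b : ℝ) :
    IntervalIntegrable W volume a b := by
  rw [intervalIntegrable_iff]
  haveI : IsFiniteMeasure (volume.restrict (Set.uIoc a b)) :=
    ⟨by rw [Measure.restrict_apply_univ]; exact measure_Ioc_lt_top⟩
  exact memLp_one_iff_integrable.1 ((hW.restrict _).mono_exponent (by norm_num))

lemma continuous_avg {W : ℝ → ℝ} (hW : ∀ a b, IntervalIntegrable W volume a b) :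
    Continuous (avg W) := by
  have h1 : avg W = fun φ =>
      (∫ ψ in (0:ℝ)..(φ + 1/2), W ψ) - ∫ ψ in (0:ℝ)..(φ - 1/2), W ψ := by
    funext φ
    rw [eq_sub_iff_add_eq, add_comm]
    exact intervalIntegral.integral_add_adjacent_intervals (hW _ _) (hW _ _)
  have hc := intervalIntegral.continuous_primitive hW 0
  rw [h1]
  exact (hc.comp (by continuity)).sub (hc.comp (by continuity))

lemma sq_avg_le {W : ℝ → ℝ} (hW : MemLp W 2 (volume : Measure ℝ)) (φ : ℝ) :
    (avg W φ)^2 ≤ avg (fun ψ => W ψ^2) φ := by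
  haveI : IsFiniteMeasure (volume.restrict (Ioc (φ - 1/2) (φ + 1/2))) :=
    ⟨by rw [Measure.restrict_apply_univ]; exact measure_Ioc_lt_top⟩
  have hW' : MemLp W 2 (volume.restrict (Ioc (φ - 1/2) (φ + 1/2))) := hW.restrict _
  have h1 : MemLp (fun _ : ℝ => (1:ℝ)) 2 (volume.restrict (Ioc (φ - 1/2) (φ + 1/2))) :=
    memLp_const 1
  have hcs := abs_integral_mul_le hW' h1
  simp only [mul_one, one_pow] at hcs
  have hvol : (∫ _ : ℝ in Ioc (φ - 1/2) (φ + 1/2), (1:ℝ)) = 1 := by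
    simp [Real.volume_Ioc]; ring_nf
  rw [hvol, Real.sqrt_one, mul_one] at hcs
  have h2 : (avg W φ)^2 ≤ (Real.sqrt (∫ ψ in Ioc (φ - 1/2) (φ + 1/2), W ψ ^ 2))^2 := by
    rw [← sq_abs]
    apply pow_le_pow_left₀ (abs_nonneg _)
    rw [avg_eq_setIntegral]; exact hcs
  rw [Real.sq_sqrt (integral_nonneg (fun x => sq_nonneg _))] at h2
  rw [avg_eq_setIntegral (fun ψ => W ψ^2)]
  exact h2

lemma abs_avg_le {W : ℝ → ℝ} (hW : MemLp W 2 (volume : Measure ℝ)) (φ : ℝ) :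
    |avg W φ| ≤ Real.sqrt (∫ ψ : ℝ, W ψ ^ 2) := by
  have h1 := sq_avg_le hW φ
  have h2 : avg (fun ψ => W ψ^2) φ ≤ ∫ ψ : ℝ, W ψ ^ 2 := by
    rw [avg_eq_setIntegral]
    exact setIntegral_le_integral hW.integrable_sq (Filter.Eventually.of_forall fun x => sq_nonneg _)
  have := Real.sqrt_le_sqrt (h1.trans h2)
  rwa [Real.sqrt_sq_eq_abs] at this

lemma measurableSet_strip :
    MeasurableSet {p : ℝ × ℝ | p.2 ∈ Ioc (p.1 - 1/2) (p.1 + 1/2)} := by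
  have : {p : ℝ × ℝ | p.2 ∈ Ioc (p.1 - 1/2) (p.1 + 1/2)}
      = {p : ℝ × ℝ | p.1 - 1/2 < p.2} ∩ {p : ℝ × ℝ | p.2 ≤ p.1 + 1/2} := rfl
  rw [this]
  exact (measurableSet_lt (measurable_fst.sub measurable_const) measurable_snd).inter
    (measurableSet_le measurable_snd (measurable_fst.add measurable_const))

lemma strip_section (ψ : ℝ) :
    {φ : ℝ | ψ ∈ Ioc (φ - 1/2) (φ + 1/2)} = Ico (ψ - 1/2) (ψ + 1/2) := by
  ext φ; simp only [mem_setOf_eq, mem_Ioc, mem_Ico]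
  constructor <;> rintro ⟨h1, h2⟩ <;> constructor <;> linarith

lemma avg_int_eq {u : ℝ → ℝ} (hm : Measurable u) (h0 : ∀ x, 0 ≤ u x)
    (hu : Integrable u (volume : Measure ℝ)) :
    Integrable (avg u) (volume : Measure ℝ) ∧ (∫ φ, avg u φ) = ∫ ψ, u ψ := by
  have hcont : Continuous (avg u) := continuous_avg (fun a b => hu.intervalIntegrable)
  have h0' : ∀ φ, 0 ≤ avg u φ := fun φ => by
    rw [avg_eq_setIntegral]; exact integral_nonneg fun x => h0 x
  set A : Set (ℝ × ℝ) := {p : ℝ × ℝ | p.2 ∈ Ioc (p.1 - 1/2) (p.1 + 1/2)} with hA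
  set F : ℝ × ℝ → ENNReal := A.indicator (fun p => ENNReal.ofReal (u p.2)) with hF
  have hFm : Measurable F :=
    ((ENNReal.measurable_ofReal.comp (hm.comp measurable_snd))).indicator measurableSet_strip
  have hinner : ∀ φ, ENNReal.ofReal (avg u φ) = ∫⁻ ψ, F (φ, ψ) := by
    intro φ
    rw [avg_eq_setIntegral,
      ofReal_integral_eq_lintegral_ofReal hu.restrict (Filter.Eventually.of_forall h0),
      ← lintegral_indicator measurableSet_Ioc]
    apply lintegral_congr; intro ψ
    by_cases h : ψ ∈ Ioc (φ - 1/2) (φ + 1/2)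
    · rw [Set.indicator_of_mem h, hF, Set.indicator_of_mem (show (φ, ψ) ∈ A from h)]
    · rw [Set.indicator_of_notMem h, hF, Set.indicator_of_notMem (show (φ, ψ) ∉ A from h)]
  have key : ∫⁻ φ, ENNReal.ofReal (avg u φ) = ∫⁻ ψ, ENNReal.ofReal (u ψ) := by
    calc ∫⁻ φ, ENNReal.ofReal (avg u φ) = ∫⁻ φ, ∫⁻ ψ, F (φ, ψ) := lintegral_congr hinner
      _ = ∫⁻ ψ, ∫⁻ φ, F (φ, ψ) := lintegral_lintegral_swap hFm.aemeasurable
      _ = ∫⁻ ψ, ENNReal.ofReal (u ψ) := by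
          apply lintegral_congr; intro ψ
          have hsec : (fun φ => F (φ, ψ)) = (Ico (ψ - 1/2) (ψ + 1/2)).indicator
              (fun _ => ENNReal.ofReal (u ψ)) := by
            funext φ
            by_cases h : ψ ∈ Ioc (φ - 1/2) (φ + 1/2)
            · have h2 : φ ∈ Ico (ψ - 1/2) (ψ + 1/2) := by rw [← strip_section ψ]; exact h
              rw [hF, Set.indicator_of_mem (show (φ, ψ) ∈ A from h), Set.indicator_of_mem h2]
            · have h2 : φ ∉ Ico (ψ - 1/2) (ψ + 1/2) := by rw [← strip_section ψ]; exact h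
              rw [hF, Set.indicator_of_notMem (show (φ, ψ) ∉ A from h), Set.indicator_of_notMem h2]
          rw [hsec, lintegral_indicator measurableSet_Ico, setLIntegral_const, Real.volume_Ico]
          norm_num
  have hint : Integrable (avg u) (volume : Measure ℝ) := by
    refine ⟨hcont.aestronglyMeasurable, ?_⟩
    rw [hasFiniteIntegral_iff_ofReal (Filter.Eventually.of_forall h0'), key]
    exact (hasFiniteIntegral_iff_ofReal (Filter.Eventually.of_forall h0)).1 hu.hasFiniteIntegral
  refine ⟨hint, ?_⟩
  rw [integral_eq_lintegral_of_nonneg_ae (Filter.Eventually.of_forall h0') hcont.aestronglyMeasurable,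
    integral_eq_lintegral_of_nonneg_ae (Filter.Eventually.of_forall h0) hu.aestronglyMeasurable, key]

lemma memLp_avg {W : ℝ → ℝ} (hm : Measurable W) (hW : MemLp W 2 (volume : Measure ℝ)) :
    MemLp (avg W) 2 (volume : Measure ℝ) ∧ (∫ φ, (avg W φ)^2) ≤ ∫ ψ, (W ψ)^2 := by
  have hsq : Integrable (fun ψ => W ψ ^ 2) volume := hW.integrable_sq
  obtain ⟨hTint, hTeq⟩ := avg_int_eq (hm.pow_const 2) (fun x => sq_nonneg _) hsq
  have hcont : Continuous (avg W) := continuous_avg (memL2_intervalIntegrable hW)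
  have hptw : ∀ φ, (avg W φ)^2 ≤ avg (fun ψ => W ψ^2) φ := sq_avg_le hW
  have hint2 : Integrable (fun φ => (avg W φ)^2) volume := by
    refine Integrable.mono' hTint ((hcont.pow 2).aestronglyMeasurable) ?_
    exact Filter.Eventually.of_forall fun φ => by
      rw [Real.norm_eq_abs, abs_of_nonneg (sq_nonneg _)]; exact hptw φ
  refine ⟨(memLp_two_iff_integrable_sq hcont.aestronglyMeasurable).2 hint2, ?_⟩
  calc (∫ φ, (avg W φ)^2) ≤ ∫ φ, avg (fun ψ => W ψ^2) φ :=
        integral_mono hint2 hTint hptw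
    _ = ∫ ψ, W ψ ^ 2 := hTeq

lemma ennreal_mul_le_sq_add_sq (a b : ENNReal) : a * b ≤ a^2 + b^2 := by
  rcases le_total a b with h | h
  · calc a * b ≤ b * b := mul_le_mul' h (le_refl b)
      _ = b ^ 2 := (sq b).symm
      _ ≤ a^2 + b^2 := le_add_self
  · calc a * b ≤ a * a := mul_le_mul' (le_refl a) h
      _ = a ^ 2 := (sq a).symm
      _ ≤ a^2 + b^2 := le_self_add

lemma lintegral_sq_lt_top {f : ℝ → ℝ} (hf : MemLp f 2 (volume : Measure ℝ)) :
    ∫⁻ x, (‖f x‖₊ : ENNReal)^2 < ⊤ := by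
  have h1 : (∫⁻ x, (‖f x ^ 2‖₊ : ENNReal)) < ⊤ :=
    (hasFiniteIntegral_def _ _).1 hf.integrable_sq.hasFiniteIntegral
  have h2 : ∫⁻ x, (‖f x‖₊ : ENNReal)^2 = ∫⁻ x, (‖f x ^ 2‖₊ : ENNReal) :=
    lintegral_congr fun x => by rw [nnnorm_pow, ENNReal.coe_pow]
  rwa [h2]

lemma avg_selfadjoint {u v : ℝ → ℝ} (hum : Measurable u) (hvm : Measurable v)
    (hu : MemLp u 2 (volume : Measure ℝ)) (hv : MemLp v 2 (volume : Measure ℝ)) :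
    (∫ φ, avg u φ * v φ) = ∫ ψ, u ψ * avg v ψ := by
  set A : Set (ℝ × ℝ) := {p : ℝ × ℝ | p.2 ∈ Ioc (p.1 - 1/2) (p.1 + 1/2)} with hA
  set G : ℝ × ℝ → ℝ := A.indicator (fun p => u p.2 * v p.1) with hG
  have hGm : Measurable G :=
    ((hum.comp measurable_snd).mul (hvm.comp measurable_fst)).indicator measurableSet_strip
  have hind1m : Measurable (A.indicator (fun p : ℝ × ℝ => (‖u p.2‖₊ : ENNReal)^2)) :=
    (((hum.comp measurable_snd).nnnorm.coe_nnreal_ennreal).pow_const 2).indicator measurableSet_strip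
  have hind2m : Measurable (A.indicator (fun p : ℝ × ℝ => (‖v p.1‖₊ : ENNReal)^2)) :=
    (((hvm.comp measurable_fst).nnnorm.coe_nnreal_ennreal).pow_const 2).indicator measurableSet_strip
  have hbound : ∀ p : ℝ × ℝ, (‖G p‖₊ : ENNReal) ≤
      A.indicator (fun p => (‖u p.2‖₊ : ENNReal)^2) p
        + A.indicator (fun p => (‖v p.1‖₊ : ENNReal)^2) p := by
    intro p
    by_cases h : p ∈ A
    · rw [hG, Set.indicator_of_mem h, Set.indicator_of_mem h, Set.indicator_of_mem h,
        nnnorm_mul, ENNReal.coe_mul]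
      exact ennreal_mul_le_sq_add_sq _ _
    · rw [hG, Set.indicator_of_notMem h, Set.indicator_of_notMem h, Set.indicator_of_notMem h]
      simp
  have hI1 : (∫⁻ p, A.indicator (fun p : ℝ × ℝ => (‖u p.2‖₊ : ENNReal)^2) p
      ∂((volume : Measure ℝ).prod volume)) = ∫⁻ ψ, (‖u ψ‖₊ : ENNReal)^2 := by
    rw [lintegral_prod_symm' _ hind1m]
    apply lintegral_congr; intro ψ
    have hsec : (fun φ => A.indicator (fun p : ℝ × ℝ => (‖u p.2‖₊ : ENNReal)^2) (φ, ψ))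
        = (Ico (ψ - 1/2) (ψ + 1/2)).indicator (fun _ => (‖u ψ‖₊ : ENNReal)^2) := by
      funext φ
      by_cases h : ψ ∈ Ioc (φ - 1/2) (φ + 1/2)
      · have h2 : φ ∈ Ico (ψ - 1/2) (ψ + 1/2) := by rw [← strip_section ψ]; exact h
        rw [Set.indicator_of_mem (show (φ, ψ) ∈ A from h), Set.indicator_of_mem h2]
      · have h2 : φ ∉ Ico (ψ - 1/2) (ψ + 1/2) := by rw [← strip_section ψ]; exact h
        rw [Set.indicator_of_notMem (show (φ, ψ) ∉ A from h), Set.indicator_of_notMem h2]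
    rw [hsec, lintegral_indicator measurableSet_Ico, setLIntegral_const, Real.volume_Ico]
    norm_num
  have hI2 : (∫⁻ p, A.indicator (fun p : ℝ × ℝ => (‖v p.1‖₊ : ENNReal)^2) p
      ∂((volume : Measure ℝ).prod volume)) = ∫⁻ φ, (‖v φ‖₊ : ENNReal)^2 := by
    rw [lintegral_prod _ hind2m.aemeasurable]
    apply lintegral_congr; intro φ
    have hsec : (fun ψ => A.indicator (fun p : ℝ × ℝ => (‖v p.1‖₊ : ENNReal)^2) (φ, ψ))
        = (Ioc (φ - 1/2) (φ + 1/2)).indicator (fun _ => (‖v φ‖₊ : ENNReal)^2) := by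
      funext ψ
      by_cases h : ψ ∈ Ioc (φ - 1/2) (φ + 1/2)
      · rw [Set.indicator_of_mem (show (φ, ψ) ∈ A from h), Set.indicator_of_mem h]
      · rw [Set.indicator_of_notMem (show (φ, ψ) ∉ A from h), Set.indicator_of_notMem h]
    rw [hsec, lintegral_indicator measurableSet_Ioc, setLIntegral_const, Real.volume_Ioc]
    norm_num
  have hfin : HasFiniteIntegral G ((volume : Measure ℝ).prod volume) := by
    rw [hasFiniteIntegral_def]
    calc (∫⁻ p, (‖G p‖₊ : ENNReal) ∂((volume : Measure ℝ).prod volume))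
        ≤ ∫⁻ p, (A.indicator (fun p : ℝ × ℝ => (‖u p.2‖₊ : ENNReal)^2) p
            + A.indicator (fun p : ℝ × ℝ => (‖v p.1‖₊ : ENNReal)^2) p)
            ∂((volume : Measure ℝ).prod volume) := lintegral_mono hbound
      _ = (∫⁻ p, A.indicator (fun p : ℝ × ℝ => (‖u p.2‖₊ : ENNReal)^2) p
            ∂((volume : Measure ℝ).prod volume))
          + ∫⁻ p, A.indicator (fun p : ℝ × ℝ => (‖v p.1‖₊ : ENNReal)^2) p
            ∂((volume : Measure ℝ).prod volume) := lintegral_add_left hind1m _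
      _ < ⊤ := by
          rw [hI1, hI2]
          exact ENNReal.add_lt_top.2 ⟨lintegral_sq_lt_top hu, lintegral_sq_lt_top hv⟩
  have hint : Integrable (Function.uncurry fun φ ψ => G (φ, ψ))
      ((volume : Measure ℝ).prod volume) := ⟨hGm.aestronglyMeasurable, hfin⟩
  have hswap := integral_integral_swap hint
  have hL : ∀ φ, (∫ ψ, G (φ, ψ)) = avg u φ * v φ := by
    intro φ
    have : (fun ψ => G (φ, ψ))
        = fun ψ => (Ioc (φ - 1/2) (φ + 1/2)).indicator u ψ * v φ := by
      funext ψ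
      by_cases h : ψ ∈ Ioc (φ - 1/2) (φ + 1/2)
      · rw [hG, Set.indicator_of_mem (show (φ, ψ) ∈ A from h), Set.indicator_of_mem h]
      · rw [hG, Set.indicator_of_notMem (show (φ, ψ) ∉ A from h), Set.indicator_of_notMem h,
          zero_mul]
    rw [this, integral_mul_const, integral_indicator measurableSet_Ioc, ← avg_eq_setIntegral]
  have hR : ∀ ψ, (∫ φ, G (φ, ψ)) = u ψ * avg v ψ := by
    intro ψ
    have : (fun φ => G (φ, ψ))
        = fun φ => u ψ * (Ico (ψ - 1/2) (ψ + 1/2)).indicator v φ := by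
      funext φ
      by_cases h : ψ ∈ Ioc (φ - 1/2) (φ + 1/2)
      · have h2 : φ ∈ Ico (ψ - 1/2) (ψ + 1/2) := by rw [← strip_section ψ]; exact h
        rw [hG, Set.indicator_of_mem (show (φ, ψ) ∈ A from h), Set.indicator_of_mem h2]
      · have h2 : φ ∉ Ico (ψ - 1/2) (ψ + 1/2) := by rw [← strip_section ψ]; exact h
        rw [hG, Set.indicator_of_notMem (show (φ, ψ) ∉ A from h), Set.indicator_of_notMem h2,
          mul_zero]
    rw [this, integral_const_mul, integral_indicator measurableSet_Ico,
      integral_Ico_eq_integral_Ioo, ← integral_Ioc_eq_integral_Ioo, ← avg_eq_setIntegral]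
  calc (∫ φ, avg u φ * v φ) = ∫ φ, ∫ ψ, G (φ, ψ) := by
        apply integral_congr_ae; exact Filter.Eventually.of_forall fun φ => (hL φ).symm
    _ = ∫ ψ, ∫ φ, G (φ, ψ) := hswap
    _ = ∫ ψ, u ψ * avg v ψ := by
        apply integral_congr_ae; exact Filter.Eventually.of_forall fun ψ => hR ψ

section PhiCalc
variable {Φ : ℝ → ℝ} {R : ℝ}

lemma hd2_eq (hR : 0 < R) (hC2 : ContDiffOn ℝ 2 Φ (Icc (-R) R)) :
    ∀ x ∈ Icc (-R) R, derivWithin (derivWithin Φ (Icc (-R) R)) (Icc (-R) R) x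
      = iteratedDerivWithin 2 Φ (Icc (-R) R) x := by
  have hUD : UniqueDiffOn ℝ (Icc (-R) R) := uniqueDiffOn_Icc (by linarith)
  intro x hx
  rw [show (2:ℕ) = 1 + 1 from rfl, iteratedDerivWithin_succ]
  exact (derivWithin_congr (fun y hy => congrFun iteratedDerivWithin_one y)
    (congrFun iteratedDerivWithin_one x)).symm

lemma phi_deriv_mono (hR : 0 < R) (hC2 : ContDiffOn ℝ 2 Φ (Icc (-R) R))
    (hconv : ∀ r ∈ Icc (-R) R, 0 ≤ iteratedDerivWithin 2 Φ (Icc (-R) R) r) :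
    MonotoneOn (derivWithin Φ (Icc (-R) R)) (Icc (-R) R) := by
  have hUD : UniqueDiffOn ℝ (Icc (-R) R) := uniqueDiffOn_Icc (by linarith)
  have hP1diff : DifferentiableOn ℝ (derivWithin Φ (Icc (-R) R)) (Icc (-R) R) :=
    (hC2.derivWithin (m := 1) hUD (by norm_num)).differentiableOn one_ne_zero
  refine monotoneOn_of_hasDerivWithinAt_nonneg (convex_Icc _ _)
    (hC2.continuousOn_derivWithin hUD (by norm_num))
    (f' := iteratedDerivWithin 2 Φ (Icc (-R) R)) ?_ ?_
  · intro x hx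
    rw [interior_Icc] at hx
    have hx' : x ∈ Icc (-R) R := Ioo_subset_Icc_self hx
    have h := (hP1diff x hx').hasDerivWithinAt
    rw [hd2_eq hR hC2 x hx'] at h
    exact h.mono (by rw [interior_Icc]; exact Ioo_subset_Icc_self)
  · intro x hx
    rw [interior_Icc] at hx
    exact hconv x (Ioo_subset_Icc_self hx)

lemma phi_hasDerivAt (hR : 0 < R) (hC2 : ContDiffOn ℝ 2 Φ (Icc (-R) R)) :
    ∀ x ∈ Ioo (-R) R, HasDerivAt Φ (derivWithin Φ (Icc (-R) R) x) x := by
  intro x hx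
  have hmem : Icc (-R) R ∈ nhds x := Icc_mem_nhds hx.1 hx.2
  have hca : ContDiffAt ℝ 2 Φ x := (hC2 x (Ioo_subset_Icc_self hx)).contDiffAt hmem
  have hda : DifferentiableAt ℝ Φ x := hca.differentiableAt (by norm_num)
  have h := hda.hasDerivAt
  rwa [← derivWithin_of_mem_nhds hmem] at h

lemma phi_tangent (hR : 0 < R) (hC2 : ContDiffOn ℝ 2 Φ (Icc (-R) R))
    (hconv : ∀ r ∈ Icc (-R) R, 0 ≤ iteratedDerivWithin 2 Φ (Icc (-R) R) r)
    {a b : ℝ} (ha : a ∈ Icc (-R) R) (hb : b ∈ Icc (-R) R) :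
    Φ a + derivWithin Φ (Icc (-R) R) a * (b - a) ≤ Φ b := by
  have hmono := phi_deriv_mono hR hC2 hconv
  rcases lt_trichotomy a b with hab | hab | hab
  · have hcont : ContinuousOn Φ (Icc a b) := hC2.continuousOn.mono (Icc_subset_Icc ha.1 hb.2)
    have hioo : Ioo a b ⊆ Ioo (-R) R := Ioo_subset_Ioo ha.1 hb.2
    obtain ⟨c, hc, hceq⟩ := exists_hasDerivAt_eq_slope Φ (fun x => derivWithin Φ (Icc (-R) R) x)
      hab hcont (fun x hx => phi_hasDerivAt hR hC2 x (hioo hx))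
    have hcI : c ∈ Icc (-R) R := Ioo_subset_Icc_self (hioo hc)
    have h1 : derivWithin Φ (Icc (-R) R) a ≤ derivWithin Φ (Icc (-R) R) c :=
      hmono ha hcI (le_of_lt hc.1)
    have hceq' : derivWithin Φ (Icc (-R) R) c = (Φ b - Φ a) / (b - a) := hceq
    have h2 : Φ b - Φ a = derivWithin Φ (Icc (-R) R) c * (b - a) := by
      rw [eq_div_iff (by linarith : b - a ≠ 0)] at hceq'
      linarith [hceq']
    nlinarith [mul_le_mul_of_nonneg_right h1 (by linarith : (0:ℝ) ≤ b - a)]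
  · subst hab; simp
  · have hcont : ContinuousOn Φ (Icc b a) := hC2.continuousOn.mono (Icc_subset_Icc hb.1 ha.2)
    have hioo : Ioo b a ⊆ Ioo (-R) R := Ioo_subset_Ioo hb.1 ha.2
    obtain ⟨c, hc, hceq⟩ := exists_hasDerivAt_eq_slope Φ (fun x => derivWithin Φ (Icc (-R) R) x)
      hab hcont (fun x hx => phi_hasDerivAt hR hC2 x (hioo hx))
    have hcI : c ∈ Icc (-R) R := Ioo_subset_Icc_self (hioo hc)
    have h1 : derivWithin Φ (Icc (-R) R) c ≤ derivWithin Φ (Icc (-R) R) a :=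
      hmono hcI ha (le_of_lt hc.2)
    have hceq' : derivWithin Φ (Icc (-R) R) c = (Φ a - Φ b) / (a - b) := hceq
    have h2 : Φ a - Φ b = derivWithin Φ (Icc (-R) R) c * (a - b) := by
      rw [eq_div_iff (by linarith : a - b ≠ 0)] at hceq'
      linarith [hceq']
    nlinarith [mul_le_mul_of_nonneg_right h1 (by linarith : (0:ℝ) ≤ a - b)]

lemma phi_lipschitz (hR : 0 < R) (hC2 : ContDiffOn ℝ 2 Φ (Icc (-R) R)) :
    ∃ L : ℝ, 0 ≤ L ∧ ∀ a ∈ Icc (-R) R, ∀ b ∈ Icc (-R) R,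
      |derivWithin Φ (Icc (-R) R) b - derivWithin Φ (Icc (-R) R) a| ≤ L * |b - a| := by
  have hUD : UniqueDiffOn ℝ (Icc (-R) R) := uniqueDiffOn_Icc (by linarith)
  have hcont2 : ContinuousOn (iteratedDerivWithin 2 Φ (Icc (-R) R)) (Icc (-R) R) :=
    hC2.continuousOn_iteratedDerivWithin (by norm_num) hUD
  obtain ⟨L0, hL0⟩ := (isCompact_Icc).exists_bound_of_continuousOn hcont2
  have hP1diff : DifferentiableOn ℝ (derivWithin Φ (Icc (-R) R)) (Icc (-R) R) :=
    (hC2.derivWithin (m := 1) hUD (by norm_num)).differentiableOn one_ne_zero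
  refine ⟨max L0 0, le_max_right _ _, fun a ha b hb => ?_⟩
  have hbound : ∀ x ∈ Icc (-R) R,
      ‖derivWithin (derivWithin Φ (Icc (-R) R)) (Icc (-R) R) x‖ ≤ max L0 0 := by
    intro x hx
    rw [hd2_eq hR hC2 x hx]
    exact (hL0 x hx).trans (le_max_left _ _)
  have := (convex_Icc (-R) R).norm_image_sub_le_of_norm_derivWithin_le hP1diff hbound ha hb
  simpa [Real.norm_eq_abs] using this

end PhiCalc


/-- if `S` is a cone invariant under `∂P` and `W*` maximises `P` over
`S ∩ B_γ` with `P(W*) > 0`, then `(1/2)‖W*‖₂² = γ` and `W*` is a travelling wave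
with `σ² = ‖∂P(W*)‖₂/√(2γ) > 0`. -/
theorem statement10 (γ : ℝ) (hγ : 0 < γ) (Φ : ℝ → ℝ) (hΦ : StandingAssumptions Φ γ)
    (S : Set (ℝ → ℝ))
    (hcone : ∀ W ∈ S, ∀ c : ℝ, 0 ≤ c → (fun φ => c * W φ) ∈ S)
    (hinv : ∀ W ∈ S, dPE Φ γ W ∈ S)
    (Wstar : ℝ → ℝ) (hWS : Wstar ∈ S) (hWB : memB γ Wstar)
    (hmax : ∀ W ∈ S, memB γ W → PE Φ W ≤ PE Φ Wstar)
    (hpos : 0 < PE Φ Wstar) :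
    (1/2) * (∫ φ : ℝ, (Wstar φ)^2) = γ ∧
    0 < Real.sqrt (∫ ψ : ℝ, (dPE Φ γ Wstar ψ)^2) / Real.sqrt (2*γ) ∧
    (∀ᵐ φ ∂(volume : Measure ℝ),
      (Real.sqrt (∫ ψ : ℝ, (dPE Φ γ Wstar ψ)^2) / Real.sqrt (2*γ)) * Wstar φ
        = dPE Φ γ Wstar φ) := by
  obtain ⟨hC2, hconv, hΦ0, hΦ'0, -⟩ := hΦ
  have hR : 0 < Real.sqrt (2*γ) := Real.sqrt_pos.2 (by linarith)
  have hR2 : (Real.sqrt (2*γ))^2 = 2*γ := Real.sq_sqrt (by linarith)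
  set R := Real.sqrt (2*γ) with hRdef
  have h0I : (0:ℝ) ∈ Icc (-R) R := ⟨by linarith, by linarith⟩
  -- Φ' facts
  have hconv' : ∀ r ∈ Icc (-R) R, 0 ≤ iteratedDerivWithin 2 Φ (Icc (-R) R) r := hconv
  obtain ⟨L, hL0, hLip⟩ := phi_lipschitz hR hC2
  have hPhi'bound : ∀ a ∈ Icc (-R) R, |Phi' Φ γ a| ≤ L * |a| := by
    intro a ha
    have h := hLip 0 h0I a ha
    have h00 : derivWithin Φ (Icc (-R) R) 0 = 0 := hΦ'0
    rw [h00, sub_zero, sub_zero] at h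
    exact h
  have hPhiNonneg : ∀ b ∈ Icc (-R) R, 0 ≤ Φ b := by
    intro b hb
    have h := phi_tangent hR hC2 hconv' h0I hb
    have h00 : derivWithin Φ (Icc (-R) R) 0 = 0 := hΦ'0
    rw [hΦ0, h00] at h
    simpa using h
  have hPhiLe : ∀ a ∈ Icc (-R) R, Φ a ≤ Phi' Φ γ a * a := by
    intro a ha
    have := phi_tangent hR hC2 hconv' ha h0I
    rw [hΦ0] at this
    have h0 : Phi' Φ γ a = derivWithin Φ (Icc (-R) R) a := rfl
    rw [← h0] at this
    nlinarith [this]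
  have hPhiQuad : ∀ a ∈ Icc (-R) R, Φ a ≤ L * a^2 := by
    intro a ha
    have h1 := hPhiLe a ha
    have h2 := hPhi'bound a ha
    have h3 : Phi' Φ γ a * a ≤ |Phi' Φ γ a| * |a| := by
      rw [← abs_mul]; exact le_abs_self _
    have h4 : |Phi' Φ γ a| * |a| ≤ (L * |a|) * |a| :=
      mul_le_mul_of_nonneg_right h2 (abs_nonneg a)
    have h5 : (L * |a|) * |a| = L * a^2 := by rw [mul_assoc, ← sq_abs a, sq]
    linarith
  have hscale : ∀ c : ℝ, 1 ≤ c → ∀ a, a ∈ Icc (-R) R → c*a ∈ Icc (-R) R →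
      c * Φ a ≤ Φ (c*a) := by
    intro c hc a ha hca
    have h1 := phi_tangent hR hC2 hconv' ha hca
    have h0 : Phi' Φ γ a = derivWithin Φ (Icc (-R) R) a := rfl
    rw [← h0] at h1
    have h2 := hPhiLe a ha
    nlinarith [mul_le_mul_of_nonneg_left h2 (by linarith : (0:ℝ) ≤ c - 1)]
  -- membership of averages in the interval
  have havgI : ∀ W : ℝ → ℝ, MemLp W 2 (volume : Measure ℝ) → (∫ φ, (W φ)^2) ≤ 2*γ →
      ∀ φ, avg W φ ∈ Icc (-R) R := by
    intro W hW hWle φ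
    have h1 := abs_avg_le hW φ
    have h2 : Real.sqrt (∫ ψ : ℝ, W ψ ^ 2) ≤ R := by
      rw [hRdef]; exact Real.sqrt_le_sqrt hWle
    have := abs_le.1 (h1.trans h2)
    exact ⟨this.1, this.2⟩
  -- integrability of the PE integrand
  have hPEint : ∀ W : ℝ → ℝ, MemLp W 2 (volume : Measure ℝ) → (∫ φ, (W φ)^2) ≤ 2*γ →
      Integrable (fun φ => Φ (avg W φ)) volume := by
    intro W hW hWle
    have hmeas := hW.aestronglyMeasurable
    have hWMae : W =ᵐ[volume] hmeas.mk W := hmeas.ae_eq_mk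
    have hWMm : Measurable (hmeas.mk W) := hmeas.stronglyMeasurable_mk.measurable
    have hWM2 : MemLp (hmeas.mk W) 2 volume := hW.ae_eq hWMae
    have havgeq : avg W = avg (hmeas.mk W) := avg_congr_ae hWMae
    have havgL2 : MemLp (avg W) 2 (volume : Measure ℝ) := by
      rw [havgeq]; exact (memLp_avg hWMm hWM2).1
    have hintL : Integrable (fun φ => L * (avg W φ)^2) volume :=
      havgL2.integrable_sq.const_mul L
    have hcontW : Continuous (avg W) := continuous_avg (memL2_intervalIntegrable hW)
    have hcontΦ : Continuous (fun φ => Φ (avg W φ)) :=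
      hC2.continuousOn.comp_continuous hcontW (fun φ => havgI W hW hWle φ)
    refine hintL.mono' hcontΦ.aestronglyMeasurable ?_
    refine Filter.Eventually.of_forall fun φ => ?_
    rw [Real.norm_eq_abs, abs_of_nonneg (hPhiNonneg _ (havgI W hW hWle φ))]
    exact hPhiQuad _ (havgI W hW hWle φ)
  -- the function g and its properties
  set g : ℝ → ℝ := fun ψ => Phi' Φ γ (avg Wstar ψ) with hgdef
  have hdPE : dPE Φ γ Wstar = avg g := rfl
  have hWm : MemLp Wstar 2 volume := hWB.1
  have hmeas := hWm.aestronglyMeasurable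
  have hWMae : Wstar =ᵐ[volume] hmeas.mk Wstar := hmeas.ae_eq_mk
  set WM := hmeas.mk Wstar with hWMdef
  have hWMm : Measurable WM := hmeas.stronglyMeasurable_mk.measurable
  have hWM2 : MemLp WM 2 volume := hWm.ae_eq hWMae
  have havgeq : avg Wstar = avg WM := avg_congr_ae hWMae
  have hintWeq : (∫ φ, (Wstar φ)^2) = ∫ φ, (WM φ)^2 :=
    integral_congr_ae (hWMae.mono fun x hx => by simp [hx])
  have hcontWstar : Continuous (avg Wstar) := continuous_avg (memL2_intervalIntegrable hWm)
  have havgWstarI : ∀ φ, avg Wstar φ ∈ Icc (-R) R := havgI Wstar hWm hWB.2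
  have havgWstarL2 : MemLp (avg Wstar) 2 (volume : Measure ℝ) := by
    rw [havgeq]; exact (memLp_avg hWMm hWM2).1
  have hgcont : Continuous g :=
    (hC2.continuousOn_derivWithin (uniqueDiffOn_Icc (by linarith)) (by norm_num)).comp_continuous
      hcontWstar havgWstarI
  have hgmeas : Measurable g := hgcont.measurable
  have hg2 : MemLp g 2 volume := by
    refine (memLp_two_iff_integrable_sq hgcont.aestronglyMeasurable).2 ?_
    refine (havgWstarL2.integrable_sq.const_mul (L^2)).mono' 
      ((hgcont.pow 2).aestronglyMeasurable) ?_
    refine Filter.Eventually.of_forall fun φ => ?_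
    rw [Real.norm_eq_abs, abs_of_nonneg (sq_nonneg _)]
    have h1 := hPhi'bound (avg Wstar φ) (havgWstarI φ)
    calc g φ ^ 2 = |g φ| ^ 2 := (sq_abs _).symm
      _ ≤ (L * |avg Wstar φ|) ^ 2 := by
          apply pow_le_pow_left₀ (abs_nonneg _) h1
      _ = L^2 * (avg Wstar φ)^2 := by rw [mul_pow, sq_abs]
  obtain ⟨hDL2, hDcontr⟩ := memLp_avg hgmeas hg2
  have hDcont : Continuous (avg g) := continuous_avg (memL2_intervalIntegrable hg2)
  -- convexity master inequality
  have hconvex : ∀ V : ℝ → ℝ, MemLp V 2 (volume : Measure ℝ) → (∫ φ, (V φ)^2) ≤ 2*γ →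
      PE Φ Wstar + (∫ φ, g φ * avg V φ) - (∫ φ, g φ * avg Wstar φ) ≤ PE Φ V := by
    intro V hV hVle
    have hmeasV := hV.aestronglyMeasurable
    have hVMae : V =ᵐ[volume] hmeasV.mk V := hmeasV.ae_eq_mk
    have havgVL2 : MemLp (avg V) 2 (volume : Measure ℝ) := by
      rw [avg_congr_ae hVMae]
      exact (memLp_avg hmeasV.stronglyMeasurable_mk.measurable (hV.ae_eq hVMae)).1
    have hint1 : Integrable (fun φ => g φ * avg V φ) volume := integrable_mul_L2 hg2 havgVL2
    have hint2 : Integrable (fun φ => g φ * avg Wstar φ) volume :=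
      integrable_mul_L2 hg2 havgWstarL2
    have hintW : Integrable (fun φ => Φ (avg Wstar φ)) volume := hPEint Wstar hWm hWB.2
    have hintV : Integrable (fun φ => Φ (avg V φ)) volume := hPEint V hV hVle
    have hptw : ∀ φ, Φ (avg Wstar φ) + g φ * avg V φ - g φ * avg Wstar φ ≤ Φ (avg V φ) := by
      intro φ
      have := phi_tangent hR hC2 hconv' (havgWstarI φ) (havgI V hV hVle φ)
      have h0 : g φ = derivWithin Φ (Icc (-R) R) (avg Wstar φ) := rfl
      rw [← h0] at this
      nlinarith [this]
    have hle := integral_mono (f := fun φ => Φ (avg Wstar φ) + g φ * avg V φ - g φ * avg Wstar φ)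
      ((hintW.add hint1).sub hint2) hintV hptw
    have hle' : (∫ φ, (Φ (avg Wstar φ) + g φ * avg V φ - g φ * avg Wstar φ))
        ≤ ∫ φ, Φ (avg V φ) := hle
    have hadd : Integrable (fun φ => Φ (avg Wstar φ) + g φ * avg V φ) volume :=
      hintW.add hint1
    rw [integral_sub hadd hint2, integral_add hintW hint1] at hle'
    exact hle'
  -- Part 1 : the norm is saturated
  have hnW2nonneg : 0 ≤ ∫ φ, (Wstar φ)^2 := integral_nonneg fun φ => sq_nonneg _
  have hsat : (∫ φ, (Wstar φ)^2) = 2*γ := by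
    by_contra hne
    have hlt : (∫ φ, (Wstar φ)^2) < 2*γ := lt_of_le_of_ne hWB.2 hne
    rcases eq_or_lt_of_le hnW2nonneg with heq | hposW
    · -- the integral is zero, so Wstar vanishes a.e. and PE = 0
      have h0 : (∫ φ, (WM φ)^2) = 0 := by rw [← hintWeq, ← heq]
      have hWM0 : (fun φ => (WM φ)^2) =ᵐ[volume] 0 :=
        (integral_eq_zero_iff_of_nonneg_ae (Filter.Eventually.of_forall fun φ => sq_nonneg _)
          hWM2.integrable_sq).1 h0
      have hWM0' : WM =ᵐ[volume] 0 := by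
        filter_upwards [hWM0] with φ hφ
        have : (WM φ)^2 = 0 := hφ
        exact pow_eq_zero_iff (by norm_num) |>.1 this
      have havg0 : ∀ φ, avg Wstar φ = 0 := by
        intro φ
        rw [havgeq, avg_eq_setIntegral]
        rw [integral_congr_ae (ae_restrict_of_ae hWM0')]
        simp
      have : PE Φ Wstar = 0 := by
        unfold PE
        simp only [havg0, hΦ0, integral_zero]
      linarith
    · -- 0 < ∫ Wstar² < 2γ : scale up
      set m := ∫ φ, (Wstar φ)^2 with hmdef
      set c := Real.sqrt (2*γ/m) with hcdef
      have hcm : 0 ≤ 2*γ/m := le_of_lt (div_pos (by linarith) hposW)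
      have hc2 : c^2 = 2*γ/m := Real.sq_sqrt hcm
      have hc1 : 1 < c := by
        rw [hcdef]
        rw [show (1:ℝ) = Real.sqrt 1 from (Real.sqrt_one).symm]
        apply Real.sqrt_lt_sqrt (by norm_num)
        rw [lt_div_iff₀ hposW]; linarith
      have hW'S : (fun φ => c * Wstar φ) ∈ S := hcone Wstar hWS c (by linarith)
      have hW'2 : MemLp (fun φ => c * Wstar φ) 2 volume := hWm.const_mul c
      have hW'int : (∫ φ, (c * Wstar φ)^2) = 2*γ := by
        have : (fun φ => (c * Wstar φ)^2) = fun φ => c^2 * (Wstar φ)^2 := by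
          funext φ; ring
        rw [this, integral_const_mul, hc2, div_mul_cancel₀]
        exact ne_of_gt hposW
      have hW'B : memB γ (fun φ => c * Wstar φ) := ⟨hW'2, le_of_eq hW'int⟩
      have havgW' : ∀ φ, avg (fun ψ => c * Wstar ψ) φ = c * avg Wstar φ := by
        intro φ; unfold avg; rw [intervalIntegral.integral_const_mul]
      have hptw : ∀ φ, c * Φ (avg Wstar φ) ≤ Φ (avg (fun ψ => c * Wstar ψ) φ) := by
        intro φ
        rw [havgW']
        refine hscale c (le_of_lt hc1) _ (havgWstarI φ) ?_
        have := havgI _ hW'2 (le_of_eq hW'int) φ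
        rw [havgW'] at this
        exact this
      have hint1 : Integrable (fun φ => c * Φ (avg Wstar φ)) volume :=
        (hPEint Wstar hWm hWB.2).const_mul c
      have hint2 : Integrable (fun φ => Φ (avg (fun ψ => c * Wstar ψ) φ)) volume :=
        hPEint _ hW'2 (le_of_eq hW'int)
      have hle := integral_mono hint1 hint2 hptw
      have hle2 : (∫ φ, c * Φ (avg Wstar φ)) ≤ ∫ φ, Φ (avg (fun ψ => c * Wstar ψ) φ) := hle
      rw [integral_const_mul] at hle2
      have hmax' : PE Φ (fun φ => c * Wstar φ) ≤ PE Φ Wstar := hmax _ hW'S hW'B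
      have h1 : c * PE Φ Wstar ≤ PE Φ (fun φ => c * Wstar φ) := hle2
      nlinarith
  -- Part 2/3 : the dual element D = avg g
  have hnD2 : 0 ≤ ∫ ψ, (avg g ψ)^2 := integral_nonneg fun ψ => sq_nonneg _
  have hWMint : (∫ φ, (WM φ)^2) = 2*γ := by rw [← hintWeq]; exact hsat
  have hWMnorm : Real.sqrt (∫ φ, (WM φ)^2) = R := by rw [hWMint]
  -- testing against V = 0 shows the pairing with Wstar is positive
  have havg0 : ∀ φ, avg (fun _ : ℝ => (0:ℝ)) φ = 0 := fun φ => by unfold avg; simp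
  have hzero : PE Φ (fun _ : ℝ => (0:ℝ)) = 0 := by
    unfold PE
    simp only [havg0, hΦ0, integral_zero]
  have h0mem : MemLp (fun _ : ℝ => (0:ℝ)) 2 (volume : Measure ℝ) := MemLp.zero'
  have h0le : (∫ φ : ℝ, ((fun _ : ℝ => (0:ℝ)) φ)^2) ≤ 2*γ := by simp; linarith
  have hcv0 := hconvex _ h0mem h0le
  rw [hzero] at hcv0
  have havg00 : (∫ φ, g φ * avg (fun _ : ℝ => (0:ℝ)) φ) = 0 := by simp [havg0]
  rw [havg00] at hcv0
  have hgWpos : 0 < ∫ φ, g φ * avg Wstar φ := by linarith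
  -- self-adjointness
  have hSAW : (∫ φ, avg g φ * WM φ) = ∫ φ, g φ * avg Wstar φ := by
    rw [havgeq]
    exact avg_selfadjoint hgmeas hWMm hg2 hWM2
  have hCSW := abs_integral_mul_le hDL2 hWM2
  have hCSW' : (∫ φ, avg g φ * WM φ) ≤ Real.sqrt (∫ ψ, (avg g ψ)^2) * R := by
    rw [← hWMnorm]
    exact (le_abs_self _).trans hCSW
  have hnDpos : 0 < Real.sqrt (∫ ψ, (avg g ψ)^2) := by
    rcases lt_or_ge 0 (Real.sqrt (∫ ψ, (avg g ψ)^2)) with h | h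
    · exact h
    · exfalso
      have h0' : Real.sqrt (∫ ψ, (avg g ψ)^2) = 0 := le_antisymm h (Real.sqrt_nonneg _)
      rw [h0', zero_mul, hSAW] at hCSW'
      linarith
  set nD := Real.sqrt (∫ ψ, (avg g ψ)^2) with hnDdef
  have hnDsq : nD^2 = ∫ ψ, (avg g ψ)^2 := Real.sq_sqrt hnD2
  set t := R / nD with htdef
  have ht : 0 < t := div_pos hR hnDpos
  -- the candidate V = t • (avg g)
  have hVS : (fun φ => t * avg g φ) ∈ S := hcone _ (hinv Wstar hWS) t (le_of_lt ht)
  have hV2 : MemLp (fun φ => t * avg g φ) 2 volume := hDL2.const_mul t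
  have hVint : (∫ φ, ((fun ψ => t * avg g ψ) φ)^2) = 2*γ := by
    have h1 : (fun φ => ((fun ψ => t * avg g ψ) φ)^2) = fun φ => t^2 * (avg g φ)^2 := by
      funext φ; ring
    rw [h1, integral_const_mul, ← hnDsq, htdef, div_pow,
      div_mul_cancel₀ _ (pow_ne_zero 2 (ne_of_gt hnDpos))]
    exact hR2
  have hVB : memB γ (fun φ => t * avg g φ) := ⟨hV2, le_of_eq hVint⟩
  have hmaxV := hmax _ hVS hVB
  have hcvV := hconvex _ hV2 (le_of_eq hVint)
  have hSAV : (∫ φ, g φ * avg (fun ψ => t * avg g ψ) φ) = t * ∫ ψ, (avg g ψ)^2 := by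
    have e0 := avg_selfadjoint (v := fun ψ => t * avg g ψ) hgmeas ((continuous_const.mul hDcont).measurable) hg2 hV2
    have e1 : (∫ φ, avg g φ * (fun ψ => t * avg g ψ) φ) = ∫ φ, t * (avg g φ)^2 :=
      integral_congr_ae (Filter.Eventually.of_forall fun φ => by simp; ring)
    rw [← e0, e1, integral_const_mul]
  have htnD : t * (nD^2) = nD * R := by
    rw [htdef]; field_simp
  have hkey : nD * R ≤ ∫ φ, avg g φ * WM φ := by
    rw [hSAW]
    have h2 : (∫ φ, g φ * avg (fun ψ => t * avg g ψ) φ) = nD * R := by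
      rw [hSAV, ← hnDsq, htnD]
    linarith [hcvV, hmaxV, h2.symm.le, h2.le]
  have heq2 : (∫ φ, avg g φ * WM φ) = nD * R := le_antisymm hCSW' hkey
  have hae := cs_eq hDL2 hWM2 (by rw [hWMnorm, ← hnDdef]; exact heq2)
  rw [hWMnorm, ← hnDdef] at hae
  have hdPEsqrt : Real.sqrt (∫ ψ : ℝ, (dPE Φ γ Wstar ψ)^2) = nD := by
    rw [hdPE, ← hnDdef]
  refine ⟨by linarith, ?_, ?_⟩
  · rw [hdPEsqrt]
    exact div_pos hnDpos hR
  · rw [hdPEsqrt, hdPE]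
    filter_upwards [hae, hWMae] with φ h1 h2
    rw [h2]
    field_simp
    linarith [h1]
end

section
/- Let W_CL denote the indicator function of [−1/2, 1/2]. If W ∈ L²(ℝ) is even, unimodal, almost everywhere nonnegative, satisfies ‖W‖₂² ≤ 1, and W ≠ W_CL as an element of L²(ℝ), then ‖ĀW‖_∞ < 1, whereas ‖ĀW_CL‖_∞ = (ĀW_CL)(0) = 1. -/
open MeasureTheory Real Filter
open scoped ENNReal NNReal

/-- `W` is (a.e.) even and unimodal. -/
def EvenUnimodal (W : ℝ → ℝ) : Prop :=
  (∀ᵐ φ ∂(volume : Measure ℝ), W (-φ) = W φ) ∧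
  (∀ᵐ p ∂(volume : Measure (ℝ × ℝ)), 0 ≤ p.1 → p.1 ≤ p.2 → W p.2 ≤ W p.1)

/-- The completely localised profile: indicator function of `[−1/2, 1/2]`. -/
noncomputable def WCL : ℝ → ℝ := Set.indicator (Set.Icc (-(1/2) : ℝ) (1/2)) (fun _ => 1)

section Aux

variable {W : ℝ → ℝ}

lemma intW (hW : MemLp W 2 volume) (a b : ℝ) : IntervalIntegrable W volume a b := by
  rw [intervalIntegrable_iff]
  haveI : IsFiniteMeasure (volume.restrict (Set.uIoc a b)) :=
    ⟨by rw [Measure.restrict_apply_univ]; exact measure_Ioc_lt_top⟩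
  exact ((hW.restrict _).mono_exponent (by norm_num)).integrable le_rfl

lemma key_ae (hU : EvenUnimodal W) (hpos : ∀ᵐ φ ∂(volume : Measure ℝ), 0 ≤ W φ) :
    ∀ᵐ u ∂(volume : Measure ℝ), -(1/2) < u → W (u + 1) ≤ W u := by
  set h : ℝ → ℝ≥0∞ := fun x =>
    essSup (fun y => ENNReal.ofReal (W y)) (volume.restrict (Set.Ioi x)) with hh
  have hmono : ∀ {a b : ℝ}, a ≤ b → h b ≤ h a := by
    intro a b hab
    exact essSup_mono_measure (Measure.absolutelyContinuous_of_le
      (Measure.restrict_mono (Set.Ioi_subset_Ioi hab) le_rfl))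
  have hS2 : ∀ᵐ x ∂(volume : Measure ℝ), ∀ q : ℚ, (q : ℝ) < x →
      ENNReal.ofReal (W x) ≤ h q := by
    rw [ae_all_iff]
    intro q
    have h1 : ∀ᵐ y ∂(volume.restrict (Set.Ioi (q : ℝ))),
        ENNReal.ofReal (W y) ≤ h q := ae_le_essSup
    have h2 := (ae_restrict_iff' measurableSet_Ioi).mp h1
    filter_upwards [h2] with x hx hqx
    exact hx hqx
  have hS3 : ∀ᵐ x ∂(volume : Measure ℝ), 0 ≤ x → h x ≤ ENNReal.ofReal (W x) := by
    have hprod := hU.2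
    rw [Measure.volume_eq_prod ℝ ℝ] at hprod
    have h2 := Measure.ae_ae_of_ae_prod hprod
    filter_upwards [h2] with x hx hx0
    refine essSup_le_of_ae_le _ ?_
    have h3 : ∀ᵐ y ∂(volume : Measure ℝ), y ∈ Set.Ioi x →
        ENNReal.ofReal (W y) ≤ ENNReal.ofReal (W x) := by
      filter_upwards [hx] with y hy hyx
      exact ENNReal.ofReal_le_ofReal (hy hx0 (le_of_lt hyx))
    exact (ae_restrict_iff' measurableSet_Ioi).mpr h3
  have tr1 : MeasurePreserving (fun u : ℝ => u + 1) volume volume :=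
    measurePreserving_add_right volume 1
  have trn : MeasurePreserving (fun u : ℝ => -u) (volume : Measure ℝ) volume :=
    Measure.measurePreserving_neg volume
  filter_upwards [hU.1, hS3, trn.quasiMeasurePreserving.ae hS3,
    tr1.quasiMeasurePreserving.ae hS2, hpos] with u h1 h3 h3n h2p hp hu
  have key : ENNReal.ofReal (W (u + 1)) ≤ ENNReal.ofReal (W u) := by
    rcases le_or_gt 0 u with hu0 | hu0
    · obtain ⟨q, hq1, hq2⟩ := exists_rat_btwn (show u < u + 1 by linarith)
      calc ENNReal.ofReal (W (u + 1)) ≤ h q := h2p q hq2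
        _ ≤ h u := hmono (le_of_lt hq1)
        _ ≤ ENNReal.ofReal (W u) := h3 hu0
    · obtain ⟨q, hq1, hq2⟩ := exists_rat_btwn (show -u < u + 1 by linarith)
      calc ENNReal.ofReal (W (u + 1)) ≤ h q := h2p q hq2
        _ ≤ h (-u) := hmono (le_of_lt hq1)
        _ ≤ ENNReal.ofReal (W (-u)) := h3n (by linarith)
        _ = ENNReal.ofReal (W u) := by rw [h1]
  exact (ENNReal.ofReal_le_ofReal_iff hp).mp key

lemma avg_neg (hU1 : ∀ᵐ φ ∂(volume : Measure ℝ), W (-φ) = W φ) (φ : ℝ) :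
    avg W (-φ) = avg W φ := by
  unfold avg
  have h1 : -φ - 1/2 = -(φ + 1/2) := by ring
  have h2 : -φ + 1/2 = -(φ - 1/2) := by ring
  rw [h1, h2, ← intervalIntegral.integral_comp_neg (a := φ - 1/2) (b := φ + 1/2) W]
  exact intervalIntegral.integral_congr_ae (by filter_upwards [hU1] with x hx _; exact hx)

lemma avg_le (hW : MemLp W 2 volume)
    (hkey : ∀ᵐ u ∂(volume : Measure ℝ), -(1/2) < u → W (u + 1) ≤ W u)
    {φ : ℝ} (hφ : 0 ≤ φ) : avg W φ ≤ avg W 0 := by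
  unfold avg
  rw [show (0 : ℝ) - 1/2 = -(1/2) by norm_num, show (0 : ℝ) + 1/2 = 1/2 by norm_num]
  have i1 := intW hW (-(1/2)) (φ - 1/2)
  have i2 := intW hW (φ - 1/2) (1/2)
  have i3 := intW hW (1/2) (φ + 1/2)
  have e1 : (∫ ψ in (-(1/2) : ℝ)..(1/2), W ψ)
      = (∫ ψ in (-(1/2) : ℝ)..(φ - 1/2), W ψ) + ∫ ψ in (φ - 1/2)..(1/2 : ℝ), W ψ :=
    (intervalIntegral.integral_add_adjacent_intervals i1 i2).symm
  have e2 : (∫ ψ in (φ - 1/2)..(φ + 1/2), W ψ)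
      = (∫ ψ in (φ - 1/2)..(1/2 : ℝ), W ψ) + ∫ ψ in (1/2 : ℝ)..(φ + 1/2), W ψ :=
    (intervalIntegral.integral_add_adjacent_intervals i2 i3).symm
  have e3 : (∫ ψ in (1/2 : ℝ)..(φ + 1/2), W ψ)
      = ∫ u in (-(1/2) : ℝ)..(φ - 1/2), W (u + 1) := by
    have h := intervalIntegral.integral_comp_add_right (a := -(1/2)) (b := φ - 1/2) W 1
    rw [show (-(1/2 : ℝ)) + 1 = 1/2 by norm_num, show φ - 1/2 + 1 = φ + 1/2 by ring] at h
    exact h.symm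
  have i4 : IntervalIntegrable (fun u => W (u + 1)) volume (-(1/2)) (φ - 1/2) := by
    have h := i3.comp_add_right 1
    rw [show (1/2 : ℝ) - 1 = -(1/2) by norm_num, show φ + 1/2 - 1 = φ - 1/2 by ring] at h
    exact h
  have hae : (fun u => W (u + 1)) ≤ᵐ[volume.restrict (Set.Icc (-(1/2)) (φ - 1/2))] W := by
    have hne : ∀ᵐ u ∂(volume : Measure ℝ), u ≠ -(1/2) := by
      rw [ae_iff]
      have : {u : ℝ | ¬ u ≠ -(1/2)} = {-(1/2)} := by ext u; simp
      rw [this]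
      exact measure_singleton _
    have h2 := ae_restrict_of_ae (s := Set.Icc (-(1/2 : ℝ)) (φ - 1/2)) (hkey.and hne)
    filter_upwards [h2, ae_restrict_mem measurableSet_Icc] with u hu hmem
    exact hu.1 (lt_of_le_of_ne hmem.1 (Ne.symm hu.2))
  have e4 : (∫ u in (-(1/2) : ℝ)..(φ - 1/2), W (u + 1))
      ≤ ∫ u in (-(1/2) : ℝ)..(φ - 1/2), W u :=
    intervalIntegral.integral_mono_ae_restrict (by linarith) i4 i1 hae
  linarith

lemma avg_nonneg (hpos : ∀ᵐ φ ∂(volume : Measure ℝ), 0 ≤ W φ) (φ : ℝ) : 0 ≤ avg W φ :=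
  intervalIntegral.integral_nonneg_of_ae (by linarith) hpos

lemma WCL_integrable : Integrable WCL volume := by
  unfold WCL
  rw [integrable_indicator_iff measurableSet_Icc]
  exact integrableOn_const measure_Icc_lt_top.ne

lemma avgWCL_zero : avg WCL 0 = 1 := by
  unfold avg
  rw [intervalIntegral.integral_congr (g := fun _ => (1 : ℝ)) ?_]
  · simp
    norm_num
  · intro x hx
    rw [Set.uIcc_of_le (by norm_num)] at hx
    exact Set.indicator_of_mem
      (Set.mem_Icc.mpr ⟨by linarith [hx.1], by linarith [hx.2]⟩) _

lemma avgWCL_nonneg (φ : ℝ) : 0 ≤ avg WCL φ :=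
  intervalIntegral.integral_nonneg (by linarith)
    (fun x _ => Set.indicator_nonneg (fun _ _ => zero_le_one) x)

lemma avgWCL_le_one (φ : ℝ) : avg WCL φ ≤ 1 := by
  unfold avg
  have h := intervalIntegral.integral_mono_on (f := WCL) (g := fun _ => (1 : ℝ))
    (a := φ - 1/2) (b := φ + 1/2) (μ := volume) (by linarith)
    WCL_integrable.intervalIntegrable intervalIntegrable_const ?_
  · refine le_trans h ?_
    rw [intervalIntegral.integral_const]
    norm_num
  · intro x _
    unfold WCL
    by_cases hx : x ∈ Set.Icc (-(1/2) : ℝ) (1/2)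
    · rw [Set.indicator_of_mem hx]
    · rw [Set.indicator_of_notMem hx]
      norm_num

lemma avgWCL_eq {φ : ℝ} (h0 : 0 < φ) (h1 : φ < 1/2) : avg WCL φ = 1 - φ := by
  unfold avg
  have i1 : IntervalIntegrable WCL volume (φ - 1/2) (1/2) := WCL_integrable.intervalIntegrable
  have i2 : IntervalIntegrable WCL volume (1/2) (φ + 1/2) := WCL_integrable.intervalIntegrable
  rw [← intervalIntegral.integral_add_adjacent_intervals i1 i2]
  have e1 : (∫ x in (φ - 1/2)..(1/2 : ℝ), WCL x) = 1 - φ := by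
    rw [intervalIntegral.integral_congr (g := fun _ => (1 : ℝ)) ?_]
    · rw [intervalIntegral.integral_const, smul_eq_mul]
      ring
    · intro x hx
      rw [Set.uIcc_of_le (by linarith)] at hx
      exact Set.indicator_of_mem
        (Set.mem_Icc.mpr ⟨by linarith [hx.1], hx.2⟩) _
  have e2 : (∫ x in (1/2 : ℝ)..(φ + 1/2), WCL x) = 0 := by
    rw [intervalIntegral.integral_of_le (by linarith)]
    have heq : Set.EqOn WCL (fun _ => (0 : ℝ)) (Set.Ioc (1/2 : ℝ) (φ + 1/2)) := by
      intro x hx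
      unfold WCL
      refine Set.indicator_of_notMem (fun hmem => ?_) _
      exact absurd (Set.mem_Icc.mp hmem).2 (not_le.mpr (Set.mem_Ioc.mp hx).1)
    rw [setIntegral_congr_fun measurableSet_Ioc heq]
    simp
  rw [e1, e2]
  ring

end Aux

section MainAux

variable {W : ℝ → ℝ}

lemma avg_zero_lt_one (hW : MemLp W 2 volume) (hball : (∫ φ : ℝ, (W φ)^2) ≤ 1)
    (hne : ¬ (W =ᵐ[volume] WCL)) : avg W 0 < 1 := by
  have hWCL2 : MemLp WCL 2 volume :=
    memLp_indicator_const 2 measurableSet_Icc 1 (Or.inr measure_Icc_lt_top.ne)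
  have hIcc : IntegrableOn W (Set.Icc (-(1/2) : ℝ) (1/2)) volume :=
    (intervalIntegrable_iff_integrableOn_Icc_of_le (by norm_num)).mp (intW hW _ _)
  have hmul : (fun φ => W φ * WCL φ) = (Set.Icc (-(1/2) : ℝ) (1/2)).indicator W := by
    funext φ
    unfold WCL
    by_cases h : φ ∈ Set.Icc (-(1/2) : ℝ) (1/2)
    · rw [Set.indicator_of_mem h, Set.indicator_of_mem h]
      ring
    · rw [Set.indicator_of_notMem h, Set.indicator_of_notMem h]
      ring
  have hintmul : Integrable (fun φ => W φ * WCL φ) volume := by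
    rw [hmul, integrable_indicator_iff measurableSet_Icc]; exact hIcc
  have hval : (∫ φ : ℝ, W φ * WCL φ) = avg W 0 := by
    rw [hmul, integral_indicator measurableSet_Icc]
    unfold avg
    rw [show (0 : ℝ) - 1/2 = -(1/2) by norm_num, show (0 : ℝ) + 1/2 = 1/2 by norm_num,
      intervalIntegral.integral_of_le (by norm_num)]
    exact integral_Icc_eq_integral_Ioc
  have hWCLsq : ∀ φ, WCL φ ^ 2 = WCL φ := by
    intro φ
    unfold WCL
    by_cases h : φ ∈ Set.Icc (-(1/2) : ℝ) (1/2)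
    · rw [Set.indicator_of_mem h]
      norm_num
    · rw [Set.indicator_of_notMem h]
      norm_num
  have hWCLval : (∫ φ : ℝ, WCL φ) = 1 := by
    unfold WCL
    rw [integral_indicator_const _ measurableSet_Icc]
    rw [Real.volume_real_Icc]
    norm_num
  have hWCLsqint : Integrable (fun φ => WCL φ ^ 2) volume := hWCL2.integrable_sq
  have hWsq : Integrable (fun φ => W φ ^ 2) volume := hW.integrable_sq
  have hsqint : Integrable (fun φ => (W φ - WCL φ) ^ 2) volume := (hW.sub hWCL2).integrable_sq
  have h0 : 0 ≤ ∫ φ : ℝ, (W φ - WCL φ) ^ 2 := integral_nonneg (fun φ => sq_nonneg _)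
  have hpos2 : 0 < ∫ φ : ℝ, (W φ - WCL φ) ^ 2 := by
    rcases h0.lt_or_eq with h | h
    · exact h
    · exfalso
      have hz := (integral_eq_zero_iff_of_nonneg (fun φ => sq_nonneg _) hsqint).mp h.symm
      apply hne
      filter_upwards [hz] with φ hφ
      have : W φ - WCL φ = 0 := by
        have := sq_eq_zero_iff.mp hφ
        exact this
      linarith
  have hexp : (∫ φ : ℝ, (W φ - WCL φ) ^ 2)
      = (∫ φ : ℝ, W φ ^ 2) - 2 * (∫ φ : ℝ, W φ * WCL φ) + ∫ φ : ℝ, WCL φ ^ 2 := by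
    have hpt : ∀ φ, (W φ - WCL φ) ^ 2 = (W φ ^ 2 - 2 * (W φ * WCL φ)) + WCL φ ^ 2 :=
      fun φ => by ring
    calc (∫ φ : ℝ, (W φ - WCL φ) ^ 2)
        = ∫ φ : ℝ, (W φ ^ 2 - 2 * (W φ * WCL φ)) + WCL φ ^ 2 := by simp_rw [hpt]
      _ = (∫ φ : ℝ, W φ ^ 2 - 2 * (W φ * WCL φ)) + ∫ φ : ℝ, WCL φ ^ 2 :=
          integral_add (hWsq.sub (hintmul.const_mul 2)) hWCLsqint
      _ = ((∫ φ : ℝ, W φ ^ 2) - ∫ φ : ℝ, 2 * (W φ * WCL φ)) + ∫ φ : ℝ, WCL φ ^ 2 := by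
          rw [integral_sub hWsq (hintmul.const_mul 2)]
      _ = ((∫ φ : ℝ, W φ ^ 2) - 2 * ∫ φ : ℝ, W φ * WCL φ) + ∫ φ : ℝ, WCL φ ^ 2 := by
          rw [integral_const_mul]
  have hWCLsqval : (∫ φ : ℝ, WCL φ ^ 2) = 1 := by
    simp_rw [hWCLsq]; exact hWCLval
  rw [hexp, hval, hWCLsqval] at hpos2
  linarith

lemma eLpNorm_avgWCL_lower : (1 : ℝ≥0∞) ≤ eLpNorm (avg WCL) ⊤ volume := by
  rw [eLpNorm_exponent_top]
  by_contra hlt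
  push_neg at hlt
  set L := eLpNormEssSup (avg WCL) volume with hL
  have hLne : L ≠ ⊤ := (hlt.trans_le le_top).ne
  have hL1 : L.toReal < 1 := by
    have := (ENNReal.toReal_lt_toReal hLne (by norm_num : (1 : ℝ≥0∞) ≠ ⊤)).mpr hlt
    simpa using this
  set δ : ℝ := min ((1 - L.toReal) / 2) (1/4) with hδ
  have hδ0 : 0 < δ := lt_min (by linarith) (by norm_num)
  have hδ4 : δ ≤ 1/4 := min_le_right _ _
  have hδL : L < ENNReal.ofReal (1 - δ) := by
    have h1 : L.toReal < 1 - δ := by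
      have := min_le_left ((1 - L.toReal) / 2) (1/4)
      have h2 : δ ≤ (1 - L.toReal) / 2 := by rw [hδ]; exact this
      linarith
    calc L = ENNReal.ofReal L.toReal := (ENNReal.ofReal_toReal hLne).symm
      _ < ENNReal.ofReal (1 - δ) := by
          exact ENNReal.ofReal_lt_ofReal_iff (by linarith [ENNReal.toReal_nonneg (a := L)]) |>.mpr h1
  have hae := ae_le_eLpNormEssSup (f := avg WCL) (μ := volume)
  rw [ae_iff] at hae
  have hsub : Set.Ioo (0 : ℝ) δ ⊆ {φ : ℝ | ¬ (‖avg WCL φ‖₊ : ℝ≥0∞) ≤ L} := by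
    intro φ hφ
    simp only [Set.mem_setOf_eq, not_le]
    have hval : avg WCL φ = 1 - φ := avgWCL_eq hφ.1 (by linarith [hφ.2])
    calc L < ENNReal.ofReal (1 - δ) := hδL
      _ ≤ ENNReal.ofReal (1 - φ) := ENNReal.ofReal_le_ofReal (by linarith [hφ.2])
      _ = (‖avg WCL φ‖₊ : ℝ≥0∞) := by
          rw [hval, ← enorm_eq_nnnorm, Real.enorm_eq_ofReal (by linarith [hφ.2] : (0 : ℝ) ≤ 1 - φ)]
  have hIoo : volume (Set.Ioo (0 : ℝ) δ) = 0 :=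
    le_antisymm (hae ▸ measure_mono hsub) (zero_le)
  rw [Real.volume_Ioo] at hIoo
  have := ENNReal.ofReal_eq_zero.mp hIoo
  linarith

end MainAux

/-- any even, unimodal, nonnegative `W` with `‖W‖₂² ≤ 1` and
`W ≠ W_CL` in `L²` satisfies `‖ĀW‖_∞ < 1 = (ĀW_CL)(0) = ‖ĀW_CL‖_∞`. -/
theorem statement13 (W : ℝ → ℝ) (hW : MemLp W 2 volume)
    (hball : (∫ φ : ℝ, (W φ)^2) ≤ 1)
    (hU : EvenUnimodal W) (hpos : ∀ᵐ φ ∂(volume : Measure ℝ), 0 ≤ W φ)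
    (hne : ¬ (W =ᵐ[volume] WCL)) :
    eLpNorm (avg W) ⊤ volume < 1 ∧
    avg WCL 0 = 1 ∧
    eLpNorm (avg WCL) ⊤ volume = 1 := by
  have hkey := key_ae hU hpos
  have hub : ∀ φ, avg W φ ≤ avg W 0 := by
    intro φ
    rcases le_or_gt 0 φ with h | h
    · exact avg_le hW hkey h
    · have hsym := avg_neg hU.1 (-φ)
      rw [neg_neg] at hsym
      rw [hsym]
      exact avg_le hW hkey (by linarith)
  have ha00 : 0 ≤ avg W 0 := avg_nonneg hpos 0
  have ha01 : avg W 0 < 1 := avg_zero_lt_one hW hball hne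
  refine ⟨?_, avgWCL_zero, ?_⟩
  · have hle : eLpNorm (avg W) ⊤ volume ≤ ENNReal.ofReal (avg W 0) := by
      rw [eLpNorm_exponent_top]
      apply eLpNormEssSup_le_of_ae_bound (C := avg W 0)
      apply ae_of_all
      intro φ
      rw [Real.norm_eq_abs, abs_le]
      exact ⟨by linarith [avg_nonneg hpos φ], hub φ⟩
    exact lt_of_le_of_lt hle (ENNReal.ofReal_lt_one.mpr ha01)
  · refine le_antisymm ?_ eLpNorm_avgWCL_lower
    rw [eLpNorm_exponent_top]
    have h := eLpNormEssSup_le_of_ae_bound (μ := volume) (C := (1 : ℝ))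
      (ae_of_all _ fun φ => by
        rw [Real.norm_eq_abs, abs_le]
        exact ⟨by linarith [avgWCL_nonneg φ], avgWCL_le_one φ⟩)
    simpa using h
end

section
/- Let Φ : [0, ∞) → ℝ be C² and super-quadratic on [0, ∞) (i.e. Φ(sr) ≥ s²Φ(r) for all r ≥ 0 and s ≥ 1) with Φ(0) = Φ′(0) = 0 and β := Φ″(0) ≥ 0, and suppose Φ(r) ≥ (β/2)r² + εr^p for all r ≥ 0 with constants ε > 0 and p > 2. Then there exists γ₀ ≥ 0 such that for every γ > γ₀ the supremum of P over S_γ is strictly greater than βγ; moreover, if β = 0 or 2 < p < 6, then one may take γ₀ = 0, i.e. sup_{W ∈ S_γ} P(W) > βγ for every γ > 0. -/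
set_option maxHeartbeats 1000000


open MeasureTheory Real Filter

/-- Membership in `S_γ`: even, unimodal, a.e. nonnegative functions in `B_γ`. -/
def memS (γ : ℝ) (W : ℝ → ℝ) : Prop :=
  memB γ W ∧ EvenUnimodal W ∧ (∀ᵐ φ ∂(volume : Measure ℝ), 0 ≤ W φ)



/-- tent function of height h and half-width L -/
noncomputable def tent (h L : ℝ) (x : ℝ) : ℝ := h * max (1 - |x|/L) 0

lemma tent_cont (h L : ℝ) : Continuous (tent h L) := by
  unfold tent; fun_prop

lemma tent_nonneg (h L : ℝ) (hh : 0 ≤ h) (x : ℝ) : 0 ≤ tent h L x :=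
  mul_nonneg hh (le_max_right _ _)

lemma tent_le (h L : ℝ) (hh : 0 ≤ h) (hL : 0 < L) (x : ℝ) : tent h L x ≤ h := by
  unfold tent
  have : max (1 - |x|/L) 0 ≤ 1 := by
    apply max_le _ zero_le_one
    have : 0 ≤ |x|/L := div_nonneg (abs_nonneg x) hL.le
    linarith
  nlinarith

lemma tent_eq_zero (h L : ℝ) (x : ℝ) (hx : L ≤ |x|) (hL : 0 < L) : tent h L x = 0 := by
  unfold tent
  have : 1 - |x|/L ≤ 0 := by
    rw [sub_nonpos, le_div_iff₀ hL]; nlinarith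
  rw [max_eq_right this, mul_zero]

lemma tent_eq (h L : ℝ) (x : ℝ) (hx : |x| ≤ L) (hL : 0 < L) :
    tent h L x = h * (1 - |x|/L) := by
  unfold tent
  rw [max_eq_left]
  rw [sub_nonneg, div_le_one hL]; exact hx

lemma tent_hcs (h L : ℝ) (hL : 0 < L) : HasCompactSupport (tent h L) := by
  apply HasCompactSupport.intro (isCompact_Icc (a := -L) (b := L))
  intro x hx
  apply tent_eq_zero h L x _ hL
  simp only [Set.mem_Icc, not_and_or, not_le] at hx
  rcases hx with hx | hx
  · rw [abs_of_neg (by linarith)]; linarith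
  · rw [abs_of_pos (by linarith)]; linarith

lemma tent_even (h L x : ℝ) : tent h L (-x) = tent h L x := by
  unfold tent; rw [abs_neg]

lemma tent_anti (h L : ℝ) (hh : 0 ≤ h) (hL : 0 < L) {a b : ℝ} (ha : 0 ≤ a) (hab : a ≤ b) :
    tent h L b ≤ tent h L a := by
  unfold tent
  apply mul_le_mul_of_nonneg_left _ hh
  apply max_le_max_right
  have h1 : |a| ≤ |b| := by rw [abs_of_nonneg ha, abs_of_nonneg (le_trans ha hab)]; exact hab
  have h2 : |a|/L ≤ |b|/L := by gcongr
  linarith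

lemma integral_linear (c d a b : ℝ) :
    ∫ x in a..b, (c + d*x) = c*(b-a) + d*(b^2-a^2)/2 := by
  have h1 : ∀ x ∈ Set.uIcc a b, HasDerivAt (fun x => c*x + d*x^2/2) (c + d*x) x := by
    intro x _
    have : HasDerivAt (fun x : ℝ => c*x + d*x^2/2) (c*1 + d*(2*x^(2-1))/2) x := by
      exact ((hasDerivAt_id x).const_mul c).add (((hasDerivAt_pow 2 x)).const_mul d |>.div_const 2)
    convert this using 1; ring
  rw [intervalIntegral.integral_eq_sub_of_hasDerivAt h1 ((by fun_prop : Continuous _).intervalIntegrable a b)]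
  ring

lemma integral_one_sub_div_sq (L a b : ℝ) (hL : L ≠ 0) :
    ∫ x in a..b, (1 - x/L)^2 = L/3 * ((1-a/L)^3 - (1-b/L)^3) := by
  have h1 : ∀ x ∈ Set.uIcc a b, HasDerivAt (fun x => -(L/3) * (1-x/L)^3) ((1-x/L)^2) x := by
    intro x _
    have hb : HasDerivAt (fun x : ℝ => 1 - x/L) (-(1/L)) x := by
      simpa using ((hasDerivAt_id x).div_const L).const_sub 1
    have := ((hb.pow 3)).const_mul (-(L/3))
    refine this.congr_deriv ?_
    norm_num
    field_simp
  rw [intervalIntegral.integral_eq_sub_of_hasDerivAt h1 ((by fun_prop : Continuous _).intervalIntegrable a b)]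
  ring

lemma tent_sq_integral (h L : ℝ) (hL : 0 < L) :
    ∫ x : ℝ, (tent h L x)^2 = 2*h^2*L/3 := by
  rw [← MeasureTheory.setIntegral_eq_integral_of_forall_compl_eq_zero
      (s := Set.Icc (-L) L) (f := fun x => (tent h L x)^2)]
  · rw [MeasureTheory.integral_Icc_eq_integral_Ioc,
      ← intervalIntegral.integral_of_le (by linarith : -L ≤ L)]
    have hi1 : IntervalIntegrable (fun x => (tent h L x)^2) volume (-L) 0 :=
      (((tent_cont h L).pow 2)).intervalIntegrable _ _
    have hi2 : IntervalIntegrable (fun x => (tent h L x)^2) volume 0 L :=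
      (((tent_cont h L).pow 2)).intervalIntegrable _ _
    rw [← intervalIntegral.integral_add_adjacent_intervals hi1 hi2]
    have e2 : ∫ x in (0:ℝ)..L, (tent h L x)^2 = h^2 * (L/3) := by
      rw [intervalIntegral.integral_congr (g := fun x => h^2 * (1 - x/L)^2)]
      · rw [intervalIntegral.integral_const_mul, integral_one_sub_div_sq L 0 L hL.ne']
        field_simp [hL.ne']
        ring
      · intro x hx
        rw [Set.uIcc_of_le (by linarith : (0:ℝ) ≤ L), Set.mem_Icc] at hx
        simp only
        rw [tent_eq h L x (by rw [abs_of_nonneg hx.1]; exact hx.2) hL,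
          abs_of_nonneg hx.1, mul_pow]
    have e1 : ∫ x in (-L)..(0:ℝ), (tent h L x)^2 = h^2 * (L/3) := by
      rw [intervalIntegral.integral_congr (g := fun x => h^2 * (1 - x/(-L))^2)]
      · rw [intervalIntegral.integral_const_mul,
          integral_one_sub_div_sq (-L) (-L) 0 (by simpa using hL.ne')]
        field_simp
        ring
      · intro x hx
        rw [Set.uIcc_of_le (by linarith : -L ≤ (0:ℝ)), Set.mem_Icc] at hx
        simp only
        rw [tent_eq h L x (by rw [abs_of_nonpos hx.2]; linarith [hx.1]) hL,
          abs_of_nonpos hx.2]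
        field_simp [hL.ne']
    rw [e1, e2]; ring
  · intro x hx
    rw [Set.mem_Icc, not_and_or, not_le, not_le] at hx
    have : L ≤ |x| := by
      rcases hx with hx | hx
      · rw [abs_of_neg (by linarith)]; linarith
      · rw [abs_of_pos (by linarith)]; linarith
    rw [tent_eq_zero h L x this hL]; ring

lemma avg_tent_nonneg (h L : ℝ) (hh : 0 ≤ h) (φ : ℝ) : 0 ≤ avg (tent h L) φ :=
  intervalIntegral.integral_nonneg (by linarith) (fun x _ => tent_nonneg h L hh x)

lemma avg_tent_continuous (h L : ℝ) : Continuous (avg (tent h L)) := by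
  have hint : ∀ a b, IntervalIntegrable (tent h L) volume a b :=
    fun a b => (tent_cont h L).intervalIntegrable a b
  have hF : Continuous (fun t => ∫ x in (0:ℝ)..t, tent h L x) :=
    intervalIntegral.continuous_primitive hint 0
  have : avg (tent h L) = fun φ =>
      (∫ x in (0:ℝ)..(φ+1/2), tent h L x) - ∫ x in (0:ℝ)..(φ-1/2), tent h L x := by
    funext φ
    rw [eq_sub_iff_add_eq, add_comm]
    exact intervalIntegral.integral_add_adjacent_intervals (hint _ _) (hint _ _)
  rw [this]
  exact (hF.comp (by continuity)).sub (hF.comp (by continuity))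

lemma avg_tent_zero (h L : ℝ) (hL : 0 < L) (φ : ℝ) (hφ : L + 1/2 ≤ |φ|) :
    avg (tent h L) φ = 0 := by
  unfold avg
  rw [intervalIntegral.integral_congr (g := fun _ => (0:ℝ)), intervalIntegral.integral_zero]
  intro x hx
  rw [Set.uIcc_of_le (by linarith), Set.mem_Icc] at hx
  apply tent_eq_zero h L x _ hL
  rcases abs_le.mp (le_refl |φ|) with _
  rcases le_or_gt 0 φ with hp | hp
  · rw [abs_of_nonneg hp] at hφ
    rw [abs_of_pos (by linarith [hx.1] : 0 < x)]
    linarith [hx.1]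
  · rw [abs_of_neg hp] at hφ
    rw [abs_of_neg (by linarith [hx.2] : x < 0)]
    linarith [hx.2]

lemma avg_tent_right (h L : ℝ) (hL : 0 < L) (φ : ℝ) (h1 : 1/2 ≤ φ) (h2 : φ ≤ L - 1/2) :
    avg (tent h L) φ = h * (1 - φ/L) := by
  unfold avg
  rw [intervalIntegral.integral_congr (g := fun ψ => h + (-(h/L))*ψ)]
  · rw [integral_linear]
    field_simp
    ring
  · intro x hx
    rw [Set.uIcc_of_le (by linarith), Set.mem_Icc] at hx
    simp only
    rw [tent_eq h L x (by rw [abs_of_nonneg (by linarith [hx.1])]; linarith [hx.2]) hL,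
      abs_of_nonneg (by linarith [hx.1])]
    field_simp
    ring

lemma avg_tent_mid (h L : ℝ) (hh : 0 ≤ h) (hL : 1 ≤ L) (φ : ℝ) (hφ : |φ| ≤ 1/2) :
    h * (1 - 1/L) ≤ avg (tent h L) φ := by
  have hL0 : 0 < L := by linarith
  have key : ∫ ψ in (φ - 1/2)..(φ + 1/2), (h * (1 - 1/L)) ≤ avg (tent h L) φ := by
    apply intervalIntegral.integral_mono_on (by linarith)
      (intervalIntegrable_const) ((tent_cont h L).intervalIntegrable _ _)
    intro x hx
    rw [Set.mem_Icc] at hx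
    have hax : |x| ≤ 1 := by
      rcases abs_le.mp hφ with ⟨hm1, hm2⟩
      rw [abs_le]; constructor <;> linarith [hx.1, hx.2]
    rw [tent_eq h L x (by linarith) hL0]
    have : 1 - 1/L ≤ 1 - |x|/L := by
      have : |x|/L ≤ 1/L := by gcongr
      linarith
    nlinarith
  rw [intervalIntegral.integral_const] at key
  have : (φ + 1/2 - (φ - 1/2)) = 1 := by ring
  rw [this, one_smul] at key
  exact key

lemma avg_tent_even (h L : ℝ) (φ : ℝ) : avg (tent h L) (-φ) = avg (tent h L) φ := by
  unfold avg
  have : ∫ ψ in (φ - 1/2)..(φ + 1/2), tent h L ψ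
      = ∫ ψ in (φ - 1/2)..(φ + 1/2), tent h L (-ψ) := by
    apply intervalIntegral.integral_congr
    intro x _
    simp only
    rw [tent_even]
  rw [this, intervalIntegral.integral_comp_neg]
  have e1 : -(φ + 1/2) = -φ - 1/2 := by ring
  have e2 : -(φ - 1/2) = -φ + 1/2 := by ring
  rw [e1, e2]

lemma memS_tent (γ L : ℝ) (hγ : 0 < γ) (hL : 2 ≤ L) :
    memS γ (tent (Real.sqrt (3*γ/L)) L) := by
  set h := Real.sqrt (3*γ/L) with hh_def
  have hL0 : 0 < L := by linarith
  have hh : 0 ≤ h := Real.sqrt_nonneg _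
  have hsqv : h^2 = 3*γ/L := Real.sq_sqrt (by positivity)
  refine ⟨⟨(tent_cont h L).memLp_of_hasCompactSupport (tent_hcs h L hL0), ?_⟩, ⟨?_, ?_⟩, ?_⟩
  · rw [tent_sq_integral h L hL0, hsqv]
    field_simp
    linarith
  · exact Filter.Eventually.of_forall (fun x => tent_even h L x)
  · exact Filter.Eventually.of_forall (fun q hq1 hq2 => tent_anti h L hh hL0 hq1 hq2)
  · exact Filter.Eventually.of_forall (fun x => tent_nonneg h L hh x)

lemma PE_tent_lb (Φ : ℝ → ℝ) (β ε p γ L : ℝ) (hγ : 0 < γ) (hL : 2 ≤ L) (hβ0 : 0 ≤ β)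
    (hε : 0 < ε) (hp0 : 0 ≤ p) (hΦ0 : Φ 0 = 0) (hC : ContinuousOn Φ (Set.Ici 0))
    (hgrowth : ∀ r : ℝ, 0 ≤ r → Φ r ≥ β/2 * r^2 + ε * r ^ p)
    (hcond : 9*β*γ/(4*L^2) < ε*(L-1) * (Real.sqrt (3*γ/L)/2) ^ p) :
    β*γ < PE Φ (tent (Real.sqrt (3*γ/L)) L) := by
  set h := Real.sqrt (3*γ/L) with hh_def
  have hL0 : 0 < L := by linarith
  have hh : 0 ≤ h := Real.sqrt_nonneg _
  have hsqv : h^2 = 3*γ/L := Real.sq_sqrt (by positivity)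
  set W := tent h L with hW_def
  set G := fun φ => Φ (avg W φ) with hG_def
  have havgnn : ∀ φ, 0 ≤ avg W φ := avg_tent_nonneg h L hh
  have hGcont : Continuous G :=
    hC.comp_continuous (avg_tent_continuous h L) (fun x => havgnn x)
  have hGlb : ∀ φ, β/2 * (avg W φ)^2 + ε * (avg W φ) ^ p ≤ G φ :=
    fun φ => hgrowth _ (havgnn φ)
  have hGnn : ∀ φ, 0 ≤ G φ := by
    intro φ
    refine le_trans ?_ (hGlb φ)
    have := havgnn φ
    positivity
  have hGhcs : HasCompactSupport G := by
    apply HasCompactSupport.intro (isCompact_Icc (a := -(L+1/2)) (b := L+1/2))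
    intro x hx
    have : L + 1/2 ≤ |x| := by
      rw [Set.mem_Icc, not_and_or, not_le, not_le] at hx
      rcases hx with hx | hx
      · rw [abs_of_neg (by linarith)]; linarith
      · rw [abs_of_pos (by linarith)]; linarith
    rw [hG_def]
    simp only
    rw [avg_tent_zero h L hL0 x this, hΦ0]
  have hGint : Integrable G := hGcont.integrable_of_hasCompactSupport hGhcs
  have hGii : ∀ a b, IntervalIntegrable G volume a b := fun a b => hGcont.intervalIntegrable a b
  -- Step 1 : restrict to the interval [-(L-1/2), L-1/2]
  have step1 : (∫ x in (-(L-1/2))..(L-1/2), G x) ≤ PE Φ W := by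
    rw [intervalIntegral.integral_of_le (by linarith)]
    calc (∫ x in Set.Ioc (-(L-1/2)) (L-1/2), G x) ≤ ∫ x, G x :=
          MeasureTheory.setIntegral_le_integral hGint (Filter.Eventually.of_forall hGnn)
      _ = PE Φ W := rfl
  -- Step 2 : split into three pieces
  have step2 : (∫ x in (-(L-1/2))..(L-1/2), G x)
      = (∫ x in (-(L-1/2))..(-(1/2:ℝ)), G x) + (∫ x in (-(1/2:ℝ))..(1/2:ℝ), G x)
        + ∫ x in (1/2:ℝ)..(L-1/2), G x := by
    rw [intervalIntegral.integral_add_adjacent_intervals (hGii _ _) (hGii _ _),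
      intervalIntegral.integral_add_adjacent_intervals (hGii _ _) (hGii _ _)]
  -- Step 3 : left piece equals right piece
  have step3 : (∫ x in (-(L-1/2))..(-(1/2:ℝ)), G x) = ∫ x in (1/2:ℝ)..(L-1/2), G x := by
    have : (∫ x in (1/2:ℝ)..(L-1/2), G x) = ∫ x in (1/2:ℝ)..(L-1/2), G (-x) := by
      apply intervalIntegral.integral_congr
      intro x _
      simp only [hG_def]
      rw [avg_tent_even]
    rw [this, intervalIntegral.integral_comp_neg]
  -- Step 4 : middle piece
  have step4 : β/2 * (h*(1-1/L))^2 ≤ ∫ x in (-(1/2:ℝ))..(1/2:ℝ), G x := by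
    have hc : 0 ≤ h*(1-1/L) := by
      apply mul_nonneg hh
      have : 1/L ≤ 1 := by rw [div_le_one hL0]; linarith
      linarith
    have hmono := intervalIntegral.integral_mono_on (by norm_num : (-(1/2:ℝ)) ≤ 1/2)
      (intervalIntegrable_const (c := β/2 * (h*(1-1/L))^2)) (hGii _ _) ?_
    · rw [intervalIntegral.integral_const] at hmono
      have e : ((1:ℝ)/2 - -(1/2)) = 1 := by norm_num
      rw [e, one_smul] at hmono
      exact hmono
    · intro x hx
      rw [Set.mem_Icc] at hx
      have h1 : h*(1-1/L) ≤ avg W x :=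
        avg_tent_mid h L hh (by linarith) x (abs_le.mpr ⟨by linarith [hx.1], hx.2⟩)
      refine le_trans ?_ (hGlb x)
      have h2 : β/2 * (h*(1-1/L))^2 ≤ β/2 * (avg W x)^2 := by
        apply mul_le_mul_of_nonneg_left _ (by linarith)
        exact pow_le_pow_left₀ hc h1 2
      have h3 : 0 ≤ ε * (avg W x) ^ p := by
        have := havgnn x
        positivity
      linarith
  -- Step 5 : right piece
  set c2 : ℝ := ε * (h/2)^p with hc2_def
  have hc2nn : 0 ≤ c2 := by positivity
  have havg_right : ∀ x ∈ Set.Icc (1/2:ℝ) (L-1/2), avg W x = h*(1-x/L) := by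
    intro x hx
    rw [Set.mem_Icc] at hx
    exact avg_tent_right h L hL0 x hx.1 hx.2
  have hGlb_right : ∀ x ∈ Set.Icc (1/2:ℝ) (L-1/2), β/2*h^2*(1-x/L)^2 ≤ G x := by
    intro x hx
    have e := havg_right x hx
    rw [Set.mem_Icc] at hx
    refine le_trans ?_ (hGlb x)
    have h3 : 0 ≤ ε * (avg W x) ^ p := by
      have := havgnn x
      positivity
    have : β/2 * (avg W x)^2 = β/2*h^2*(1-x/L)^2 := by rw [e]; ring
    linarith
  have step5a : (∫ x in (1/2:ℝ)..(L/2), (β/2*h^2*(1-x/L)^2 + c2))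
       ≤ ∫ x in (1/2:ℝ)..(L/2), G x := by
    apply intervalIntegral.integral_mono_on (by linarith)
      ((by fun_prop : Continuous fun x : ℝ => β/2*h^2*(1-x/L)^2 + c2).intervalIntegrable _ _)
      (hGii _ _)
    intro x hx
    rw [Set.mem_Icc] at hx
    have hx' : x ∈ Set.Icc (1/2:ℝ) (L-1/2) := Set.mem_Icc.mpr ⟨hx.1, by linarith [hx.2]⟩
    have e := havg_right x hx'
    refine le_trans ?_ (hGlb x)
    have h2 : h/2 ≤ avg W x := by
      rw [e]
      have hxL : x/L ≤ 1/2 := by rw [div_le_iff₀ hL0]; nlinarith [hx.2]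
      nlinarith
    have h3 : c2 ≤ ε * (avg W x) ^ p := by
      apply mul_le_mul_of_nonneg_left _ hε.le
      exact Real.rpow_le_rpow (by positivity) h2 hp0
    have h4 : β/2 * (avg W x)^2 = β/2*h^2*(1-x/L)^2 := by rw [e]; ring
    linarith
  have step5b : (∫ x in (L/2:ℝ)..(L-1/2), (β/2*h^2*(1-x/L)^2))
       ≤ ∫ x in (L/2:ℝ)..(L-1/2), G x := by
    apply intervalIntegral.integral_mono_on (by linarith)
      ((by fun_prop : Continuous fun x : ℝ => β/2*h^2*(1-x/L)^2).intervalIntegrable _ _)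
      (hGii _ _)
    intro x hx
    rw [Set.mem_Icc] at hx
    exact hGlb_right x (Set.mem_Icc.mpr ⟨by linarith [hx.1], hx.2⟩)
  -- evaluate the explicit integrals
  have e5a : (∫ x in (1/2:ℝ)..(L/2), (β/2*h^2*(1-x/L)^2 + c2))
      = β/2*h^2 * (L/3 * ((1-(1/2)/L)^3 - (1-(L/2)/L)^3)) + (L/2 - 1/2) * c2 := by
    rw [intervalIntegral.integral_add
      ((by fun_prop : Continuous fun x : ℝ => β/2*h^2*(1-x/L)^2).intervalIntegrable _ _)
      (intervalIntegrable_const)]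
    rw [intervalIntegral.integral_const, smul_eq_mul]
    have : (∫ x in (1/2:ℝ)..(L/2), β/2*h^2*(1-x/L)^2)
        = β/2*h^2 * ∫ x in (1/2:ℝ)..(L/2), (1-x/L)^2 := by
      rw [← intervalIntegral.integral_const_mul]
    rw [this, integral_one_sub_div_sq L _ _ hL0.ne']
  have e5b : (∫ x in (L/2:ℝ)..(L-1/2), (β/2*h^2*(1-x/L)^2))
      = β/2*h^2 * (L/3 * ((1-(L/2)/L)^3 - (1-(L-1/2)/L)^3)) := by
    have : (∫ x in (L/2:ℝ)..(L-1/2), β/2*h^2*(1-x/L)^2)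
        = β/2*h^2 * ∫ x in (L/2:ℝ)..(L-1/2), (1-x/L)^2 := by
      rw [← intervalIntegral.integral_const_mul]
    rw [this, integral_one_sub_div_sq L _ _ hL0.ne']
  -- assemble right piece
  have step5 : β/2*h^2 * (L/3 * ((1-(1/2)/L)^3 - (1-(L-1/2)/L)^3)) + (L/2 - 1/2) * c2
      ≤ ∫ x in (1/2:ℝ)..(L-1/2), G x := by
    rw [← intervalIntegral.integral_add_adjacent_intervals (b := L/2) (hGii _ _) (hGii _ _)]
    rw [e5a] at step5a
    rw [e5b] at step5b
    linarith [step5a, step5b]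
  -- final arithmetic
  have harith : β*γ < β/2 * (h*(1-1/L))^2
      + 2*(β/2*h^2 * (L/3 * ((1-(1/2)/L)^3 - (1-(L-1/2)/L)^3)) + (L/2 - 1/2) * c2) := by
    have hT : 9*β*γ/(4*L^2) < (L-1) * c2 := by
      rw [hc2_def]
      calc 9*β*γ/(4*L^2) < ε*(L-1) * (h/2) ^ p := hcond
        _ = (L-1) * (ε * (h/2)^p) := by ring
    have hkey : β*γ - 9*β*γ/(4*L^2) ≤ β/2 * (h*(1-1/L))^2
        + β*h^2 * (L/3 * ((1-(1/2)/L)^3 - (1-(L-1/2)/L)^3)) := by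
      have hid : β/2 * (h*(1-1/L))^2
          + β*h^2 * (L/3 * ((1-(1/2)/L)^3 - (1-(L-1/2)/L)^3))
          = β*γ - 9*β*γ/(4*L^2) + 5*β*γ/(4*L^3) := by
        rw [mul_pow, hsqv]
        field_simp
        ring
      rw [hid]
      have h5 : 0 ≤ 5*β*γ/(4*L^3) := by positivity
      linarith
    linarith [hkey, hT]
  calc β*γ < _ := harith
    _ ≤ (∫ x in (-(1/2:ℝ))..(1/2:ℝ), G x) + 2 * ∫ x in (1/2:ℝ)..(L-1/2), G x := by
        nlinarith [step4, step5]
    _ = ∫ x in (-(L-1/2))..(L-1/2), G x := by rw [step2, step3]; ring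
    _ ≤ PE Φ W := step1

lemma sqrt_rpow' (y : ℝ) (hy : 0 ≤ y) (p : ℝ) : (Real.sqrt y) ^ p = y ^ (p/2) := by
  rw [Real.sqrt_eq_rpow, ← Real.rpow_mul hy, show (1/2)*p = p/2 by ring]

lemma cond_of (β ε γ p L : ℝ) (hγ : 0 < γ) (hL : 2 ≤ L) (hε : 0 < ε) (hβ0 : 0 ≤ β)
    (h : 9*β*γ/4 < (ε/2) * (3*γ/4)^(p/2) * L^(3-p/2)) :
    9*β*γ/(4*L^2) < ε*(L-1) * (Real.sqrt (3*γ/L)/2) ^ p := by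
  have hL0 : 0 < L := by linarith
  have hLp : (0:ℝ) < L^(p/2) := Real.rpow_pos_of_pos hL0 _
  have h4 : Real.sqrt (4:ℝ) = 2 := by
    rw [show (4:ℝ) = 2^2 by norm_num, Real.sqrt_sq (by norm_num : (0:ℝ) ≤ 2)]
  have h1 : (Real.sqrt (3*γ/L)/2) ^ p = (3*γ/4)^(p/2) * (L^(p/2))⁻¹ := by
    have e1 : Real.sqrt (3*γ/L)/2 = Real.sqrt (3*γ/(4*L)) := by
      rw [show 3*γ/(4*L) = (3*γ/L)/4 by ring, Real.sqrt_div' _ (by norm_num : (0:ℝ) ≤ 4), h4]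
    rw [e1, sqrt_rpow' _ (by positivity) p,
      show 3*γ/(4*L) = (3*γ/4) * L⁻¹ by ring,
      Real.mul_rpow (by positivity) (by positivity), Real.inv_rpow hL0.le]
  have e : L^(3-p/2) = L^(3:ℕ) * (L^(p/2))⁻¹ := by
    rw [show (3 - p/2 : ℝ) = (3:ℝ) + (-(p/2)) by ring, Real.rpow_add hL0,
      Real.rpow_neg hL0.le]
    congr 1
    rw [← Real.rpow_natCast L 3]
    norm_num
  calc 9*β*γ/(4*L^2) = (9*β*γ/4) / L^2 := by ring
    _ < ((ε/2) * (3*γ/4)^(p/2) * L^(3-p/2)) / L^2 := by gcongr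
    _ = ε*(L/2) * ((3*γ/4)^(p/2) * (L^(p/2))⁻¹) := by
        rw [e]; field_simp
    _ ≤ ε*(L-1) * ((3*γ/4)^(p/2) * (L^(p/2))⁻¹) := by
        have hfac : 0 ≤ (3*γ/4)^(p/2) * (L^(p/2))⁻¹ := by positivity
        have h2 : ε*(L/2) ≤ ε*(L-1) := by nlinarith [hε.le]
        exact mul_le_mul_of_nonneg_right h2 hfac
    _ = ε*(L-1) * (Real.sqrt (3*γ/L)/2) ^ p := by rw [h1]

/-- for a super-quadratic `Φ` with `Φ(r) ≥ (β/2)r² + εr^p` (`ε > 0`,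
`p > 2`) there is `γ₀ ≥ 0` such that `sup_{S_γ} P > βγ` for all `γ > γ₀`; if `β = 0`
or `2 < p < 6` one may take `γ₀ = 0`. -/
theorem statement15 (Φ : ℝ → ℝ) (β ε p : ℝ)
    (hC2 : ContDiffOn ℝ 2 Φ (Set.Ici 0))
    (hsq : ∀ r : ℝ, 0 ≤ r → ∀ s : ℝ, 1 ≤ s → Φ (s*r) ≥ s^2 * Φ r)
    (hΦ0 : Φ 0 = 0) (hΦp0 : derivWithin Φ (Set.Ici 0) 0 = 0)
    (hβdef : β = iteratedDerivWithin 2 Φ (Set.Ici 0) 0) (hβ0 : 0 ≤ β)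
    (hε : 0 < ε) (hp : 2 < p)
    (hgrowth : ∀ r : ℝ, 0 ≤ r → Φ r ≥ β/2 * r^2 + ε * r ^ p) :
    ∃ γ₀ : ℝ, 0 ≤ γ₀ ∧
      (∀ γ, γ₀ < γ → ∃ W, memS γ W ∧ β*γ < PE Φ W) ∧
      ((β = 0 ∨ (2 < p ∧ p < 6)) → ∀ γ, 0 < γ → ∃ W, memS γ W ∧ β*γ < PE Φ W) := by
  have hΦC : ContinuousOn Φ (Set.Ici 0) := hC2.continuousOn
  have hp0 : (0:ℝ) ≤ p := by linarith
  have key : ∀ γ L : ℝ, 0 < γ → 2 ≤ L →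
      9*β*γ/4 < (ε/2) * (3*γ/4)^(p/2) * L^(3-p/2) →
      ∃ W, memS γ W ∧ β*γ < PE Φ W := by
    intro γ L hγ hL hc
    exact ⟨_, memS_tent γ L hγ hL,
      PE_tent_lb Φ β ε p γ L hγ hL hβ0 hε hp0 hΦ0 hΦC hgrowth
        (cond_of β ε γ p L hγ hL hε hβ0 hc)⟩
  -- constants for the general (γ large) case, using L = 2
  set D : ℝ := (ε/2) * (3/4)^(p/2) * 2^(3-p/2) with hD_def
  have hD : 0 < D := by
    have h1 : (0:ℝ) < (3/4:ℝ)^(p/2) := Real.rpow_pos_of_pos (by norm_num) _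
    have h2 : (0:ℝ) < (2:ℝ)^(3-p/2) := Real.rpow_pos_of_pos (by norm_num) _
    positivity
  set q : ℝ := (p-2)/2 with hq_def
  have hq : 0 < q := by simp only [hq_def]; linarith
  set K : ℝ := (9*β/4)/D with hK_def
  have hK : 0 ≤ K := by positivity
  refine ⟨max 1 (K ^ (1/q)), le_trans zero_le_one (le_max_left _ _), ?_, ?_⟩
  · -- general case
    intro γ hγ'
    have hγ1 : (1:ℝ) < γ := lt_of_le_of_lt (le_max_left _ _) hγ'
    have hγ : 0 < γ := by linarith
    apply key γ 2 hγ le_rfl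
    -- need : 9βγ/4 < (ε/2) (3γ/4)^(p/2) 2^(3-p/2) = D γ^(p/2)
    have e1 : (ε/2) * (3*γ/4)^(p/2) * (2:ℝ)^(3-p/2) = D * γ^(p/2) := by
      rw [hD_def, show 3*γ/4 = (3/4)*γ by ring,
        Real.mul_rpow (by norm_num) hγ.le]
      ring
    rw [e1]
    have e2 : γ^(p/2) = γ * γ^q := by
      rw [show p/2 = 1 + q by rw [hq_def]; ring, Real.rpow_add hγ, Real.rpow_one]
    rw [e2]
    have hKγ : K < γ^q := by
      have hKq : K ^ (1/q) < γ := lt_of_le_of_lt (le_max_right _ _) hγ'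
      have := Real.rpow_lt_rpow (Real.rpow_nonneg hK _) hKq hq
      rwa [← Real.rpow_mul hK, show (1/q)*q = 1 by field_simp, Real.rpow_one] at this
    have : K * D < γ^q * D := by exact mul_lt_mul_of_pos_right hKγ hD
    rw [hK_def, div_mul_cancel₀ _ hD.ne'] at this
    calc 9*β*γ/4 = (9*β/4) * γ := by ring
      _ < (γ^q * D) * γ := by exact mul_lt_mul_of_pos_right this hγ
      _ = D * (γ * γ^q) := by ring
  · -- β = 0 or p < 6
    rintro hcase γ hγ
    rcases hcase with hb0 | ⟨_, hp6⟩
    · apply key γ 2 hγ le_rfl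
      rw [hb0]
      have h1 : (0:ℝ) < (3*γ/4:ℝ)^(p/2) := Real.rpow_pos_of_pos (by linarith) _
      have h2 : (0:ℝ) < (2:ℝ)^(3-p/2) := Real.rpow_pos_of_pos (by norm_num) _
      have : (0:ℝ) < (ε/2) * (3*γ/4)^(p/2) * 2^(3-p/2) := by positivity
      linarith
    · set r : ℝ := 3 - p/2 with hr_def
      have hr : 0 < r := by simp only [hr_def]; linarith
      set C : ℝ := (ε/2) * (3*γ/4)^(p/2) with hC_def
      have hC : 0 < C := by
        have h1 : (0:ℝ) < (3*γ/4:ℝ)^(p/2) := Real.rpow_pos_of_pos (by linarith) _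
        positivity
      set M : ℝ := (9*β*γ/4)/C with hM_def
      have hM : 0 ≤ M := by positivity
      set L : ℝ := max 2 ((M+1) ^ (1/r)) with hL_def
      have hL2 : 2 ≤ L := le_max_left _ _
      apply key γ L hγ hL2
      have hML : M < L^r := by
        have h1 : (M+1) ^ (1/r) ≤ L := le_max_right _ _
        have h2 := Real.rpow_le_rpow (Real.rpow_nonneg (by linarith) _) h1 hr.le
        rw [← Real.rpow_mul (by linarith : (0:ℝ) ≤ M+1), show (1/r)*r = 1 by field_simp,
          Real.rpow_one] at h2
        linarith
      calc 9*β*γ/4 = M * C := by rw [hM_def]; field_simp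
        _ < L^r * C := mul_lt_mul_of_pos_right hML hC
        _ = (ε/2) * (3*γ/4)^(p/2) * L^(3-p/2) := by rw [hC_def, hr_def]; ring
end
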